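/- arXiv:2301.09587 — 12 statements merged into one kernel-verified Lean document; each statement's English description precedes it below -/
import Mathlib

section
/- Let n be a non-negative integer, let α and β be complex numbers that are not negative integers, and let x be a complex number. Then ∑_{k=0}^{n} C(α, n−k) · C(β+k, k) · x^k = ∑_{k=0}^{n} (−1)^{n+k} · C(β−α+n, n−k) · C(β+k, k) · (x+1)^k. -/
open Finset

/-- Generalized binomial coefficient `C(z,k) = z(z-1)⋯(z-k+1)/k!`. -/
noncomputable def cchoose (z : ℂ) (k : ℕ) : ℂ :=
  (∏ i ∈ Finset.range k, (z - i)) / (k.factorial : ℂ)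

open Polynomial in
lemma cchoose_eq_ring (z : ℂ) (k : ℕ) : cchoose z k = Ring.choose z k := by
  have h1 : (descPochhammer ℤ k).smeval z = ∏ i ∈ Finset.range k, (z - i) := by
    induction k with
    | zero => simp [descPochhammer]
    | succ k ih =>
      rw [descPochhammer_succ_right, smeval_mul, ih, prod_range_succ, smeval_sub, smeval_X,
        smeval_natCast]
      ring
  have h2 := Ring.descPochhammer_eq_factorial_smul_choose z k
  rw [h1] at h2
  rw [cchoose, h2, nsmul_eq_mul]
  exact mul_div_cancel_left₀ _ (by exact_mod_cast k.factorial_ne_zero)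

lemma cchoose_reflect (z : ℂ) (k : ℕ) :
    cchoose ((k : ℂ) - 1 - z) k = (-1) ^ k * cchoose z k := by
  have hp : ∏ i ∈ range k, ((k : ℂ) - 1 - z - i) = (-1) ^ k * ∏ i ∈ range k, (z - i) := by
    rw [← Finset.prod_range_reflect (fun i => ((k : ℂ) - 1 - z - i)) k]
    have : ((-1 : ℂ)) ^ k * ∏ i ∈ range k, (z - i) = ∏ i ∈ range k, (-1 : ℂ) * (z - i) := by
      rw [Finset.prod_mul_distrib, Finset.prod_const, card_range]
    rw [this]
    refine Finset.prod_congr rfl fun i hi => ?_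
    have hik : i < k := mem_range.mp hi
    rw [Nat.cast_sub (by omega), Nat.cast_sub (by omega), Nat.cast_one]
    ring
  unfold cchoose
  rw [hp]
  ring

lemma cchoose_add (a b : ℂ) (m : ℕ) :
    cchoose (a + b) m = ∑ i ∈ range (m + 1), cchoose a i * cchoose b (m - i) := by
  simp only [cchoose_eq_ring]
  rw [Ring.add_choose_eq m (Commute.all a b), Finset.Nat.sum_antidiagonal_eq_sum_range_succ_mk]

lemma cchoose_absorb (β : ℂ) (j i : ℕ) :
    ((j + i).choose j : ℂ) * cchoose (β + j + i) (j + i)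
      = cchoose (β + j) j * cchoose (β + j + i) i := by
  simp only [cchoose_eq_ring]
  have h := Ring.choose_add_smul_choose (β + (j : ℂ)) j i
  rw [nsmul_eq_mul] at h
  have hc : (j + i).choose j = (j + i).choose i := by
    rw [← Nat.choose_symm (Nat.le_add_right j i), Nat.add_sub_cancel_left]
  rw [hc, h]
  ring

lemma key_coeff (n : ℕ) (α β : ℂ) {j : ℕ} (hjn : j ≤ n) :
    ∑ k ∈ range (n + 1), (-1 : ℂ) ^ (n + k) * cchoose (β - α + n) (n - k) *
        cchoose (β + k) k * (k.choose j : ℂ)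
      = cchoose α (n - j) * cchoose (β + j) j := by
  rw [range_eq_Ico, ← Finset.sum_Ico_consecutive _ (Nat.zero_le j) (by omega : j ≤ n + 1)]
  rw [Finset.sum_eq_zero (fun k hk => by
    rw [Nat.choose_eq_zero_of_lt (mem_Ico.mp hk).2]
    simp), zero_add]
  rw [Finset.sum_Ico_eq_sum_range]
  have hm : n + 1 - j = (n - j) + 1 := by omega
  rw [hm]
  set m := n - j with hmdef
  have hterm : ∀ i ∈ range (m + 1),
      (-1 : ℂ) ^ (n + (j + i)) * cchoose (β - α + n) (n - (j + i)) *
          cchoose (β + ((j + i : ℕ) : ℂ)) (j + i) * (((j + i).choose j : ℕ) : ℂ)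
        = ((-1 : ℂ) ^ m * cchoose (β + j) j) *
          (cchoose (-β - (j : ℂ) - 1) i * cchoose (β - α + n) (m - i)) := by
    intro i hi
    have him : i < m + 1 := mem_range.mp hi
    have e1 : n - (j + i) = m - i := by omega
    have e2 : ((j + i : ℕ) : ℂ) = (j : ℂ) + i := by push_cast; ring
    have e3 : (-1 : ℂ) ^ (n + (j + i)) = (-1) ^ m * (-1) ^ i := by
      have h : n + (j + i) = 2 * j + (m + i) := by omega
      rw [h, pow_add, pow_mul, pow_add]
      norm_num
    have e5 : (-β - (j : ℂ) - 1) = ((i : ℕ) : ℂ) - 1 - (β + (j : ℂ) + (i : ℂ)) := by ring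
    rw [e1, e3, e2, ← add_assoc, e5, cchoose_reflect]
    have e4 := cchoose_absorb β j i
    linear_combination ((-1 : ℂ) ^ m * (-1) ^ i * cchoose (β - α + n) (m - i)) * e4
  rw [Finset.sum_congr rfl hterm, ← Finset.mul_sum, ← cchoose_add]
  have e6 : (-β - (j : ℂ) - 1 + (β - α + (n : ℂ))) = ((m : ℕ) : ℂ) - 1 - α := by
    have : ((m : ℕ) : ℂ) = (n : ℂ) - (j : ℂ) := by
      rw [hmdef, Nat.cast_sub hjn]
    rw [this]
    ring
  rw [e6, cchoose_reflect]
  have h1 : ((-1 : ℂ) ^ m) * ((-1 : ℂ) ^ m) = 1 := by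
    rw [← mul_pow]; norm_num
  linear_combination (cchoose (β + j) j * cchoose α m) * h1

theorem stmt_0 (n : ℕ) (α β x : ℂ)
    (hα : ∀ m : ℕ, α ≠ -((m : ℂ) + 1)) (hβ : ∀ m : ℕ, β ≠ -((m : ℂ) + 1)) :
    ∑ k ∈ range (n + 1), cchoose α (n - k) * cchoose (β + k) k * x ^ k =
      ∑ k ∈ range (n + 1), (-1 : ℂ) ^ (n + k) * cchoose (β - α + n) (n - k) *
        cchoose (β + k) k * (x + 1) ^ k := by
  have hpow : ∀ k ≤ n, ∑ j ∈ range (n + 1), (k.choose j : ℂ) * x ^ j = (x + 1) ^ k := by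
    intro k hk
    rw [add_pow]
    rw [← Finset.sum_subset (Finset.range_subset_range.mpr (by omega : k + 1 ≤ n + 1))
      (fun j hj hjk => by
        have : k < j := by simp only [mem_range] at hj hjk; omega
        simp [Nat.choose_eq_zero_of_lt this])]
    refine Finset.sum_congr rfl fun j _ => ?_
    rw [one_pow]
    ring
  calc ∑ k ∈ range (n + 1), cchoose α (n - k) * cchoose (β + k) k * x ^ k
      = ∑ j ∈ range (n + 1), (∑ k ∈ range (n + 1), (-1 : ℂ) ^ (n + k) *
          cchoose (β - α + n) (n - k) * cchoose (β + k) k * (k.choose j : ℂ)) * x ^ j := by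
        refine Finset.sum_congr rfl fun j hj => ?_
        rw [key_coeff n α β (by simpa using Nat.lt_succ_iff.mp (mem_range.mp hj))]
    _ = ∑ k ∈ range (n + 1), ∑ j ∈ range (n + 1), ((-1 : ℂ) ^ (n + k) *
          cchoose (β - α + n) (n - k) * cchoose (β + k) k) * ((k.choose j : ℂ) * x ^ j) := by
        rw [Finset.sum_comm]
        refine Finset.sum_congr rfl fun j _ => ?_
        rw [Finset.sum_mul]
        refine Finset.sum_congr rfl fun k _ => ?_
        ring
    _ = ∑ k ∈ range (n + 1), (-1 : ℂ) ^ (n + k) * cchoose (β - α + n) (n - k) *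
          cchoose (β + k) k * (x + 1) ^ k := by
        refine Finset.sum_congr rfl fun k hk => ?_
        rw [← Finset.mul_sum, hpow k (by simpa using Nat.lt_succ_iff.mp (mem_range.mp hk))]
end

section
/- Let n be a non-negative integer and let s and t be complex numbers such that t is not equal to any of −1, −2, …, −n. Then ∑_{k=0}^{n} C(n,k) · C(s,k)/C(t+k,k) = ∏_{i=1}^{n} (s+t+i)/(t+i), where the right-hand side equals C(n+s+t, n)·n!·∏_{i=1}^n (t+i)^{−1} and coincides with the ratio of generalized binomial coefficients C(n+s+t,s)/C(s+t,s) whenever the latter is defined. -/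
open Finset

/-- Vandermonde identity for falling factorials over ℂ. -/
lemma vdm (n : ℕ) (s u : ℂ) :
    ∑ k ∈ range (n+1), (n.choose k : ℂ) * (∏ i ∈ range k, (s - i)) *
      (∏ i ∈ range (n-k), (u - i)) = ∏ i ∈ range n, (s + u - i) := by
  induction n with
  | zero => simp
  | succ n ih =>
    set fs : ℕ → ℂ := fun k => ∏ i ∈ range k, (s - i) with hfs
    set fu : ℕ → ℂ := fun k => ∏ i ∈ range k, (u - i) with hfu
    have key : ∀ k ∈ range (n+1),
        ((n+1).choose (k+1) : ℂ) * fs (k+1) * fu (n+1-(k+1))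
          = (n.choose k : ℂ) * fs (k+1) * fu (n-k)
            + (n.choose (k+1) : ℂ) * fs (k+1) * fu (n-k) := by
      intro k hk
      have h : n + 1 - (k+1) = n - k := by omega
      rw [Nat.choose_succ_succ, h]
      push_cast
      ring
    calc ∑ k ∈ range (n+2), ((n+1).choose k : ℂ) * fs k * fu (n+1-k)
        = (∑ k ∈ range (n+1), ((n+1).choose (k+1) : ℂ) * fs (k+1) * fu (n+1-(k+1)))
            + ((n+1).choose 0 : ℂ) * fs 0 * fu (n+1-0) :=
          Finset.sum_range_succ' _ (n+1)
      _ = (∑ k ∈ range (n+1), ((n.choose k : ℂ) * fs (k+1) * fu (n-k)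
            + (n.choose (k+1) : ℂ) * fs (k+1) * fu (n-k)))
            + ((n+1).choose 0 : ℂ) * fs 0 * fu (n+1-0) := by
          rw [Finset.sum_congr rfl key]
      _ = (∑ k ∈ range (n+1), (n.choose k : ℂ) * fs (k+1) * fu (n-k))
            + ((∑ k ∈ range (n+1), (n.choose (k+1) : ℂ) * fs (k+1) * fu (n+1-(k+1)))
            + ((n.choose 0 : ℂ) * fs 0 * fu (n+1-0))) := by
          rw [Finset.sum_add_distrib]
          have : ∀ k ∈ range (n+1), (n.choose (k+1) : ℂ) * fs (k+1) * fu (n-k)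
              = (n.choose (k+1) : ℂ) * fs (k+1) * fu (n+1-(k+1)) := by
            intro k hk
            have h : n + 1 - (k+1) = n - k := by omega
            rw [h]
          rw [Finset.sum_congr rfl this]
          simp only [Nat.choose_zero_right, Nat.cast_one]
          ring
      _ = (∑ k ∈ range (n+1), (n.choose k : ℂ) * fs (k+1) * fu (n-k))
            + (∑ k ∈ range (n+2), (n.choose k : ℂ) * fs k * fu (n+1-k)) := by
          rw [Finset.sum_range_succ' (fun k => (n.choose k : ℂ) * fs k * fu (n+1-k)) (n+1)]
      _ = (∑ k ∈ range (n+1), (n.choose k : ℂ) * fs (k+1) * fu (n-k))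
            + (∑ k ∈ range (n+1), (n.choose k : ℂ) * fs k * fu (n+1-k)) := by
          rw [Finset.sum_range_succ (fun k => (n.choose k : ℂ) * fs k * fu (n+1-k)) (n+1)]
          simp
      _ = ∑ k ∈ range (n+1), (n.choose k : ℂ) * fs k * fu (n-k) * (s + u - n) := by
          rw [← Finset.sum_add_distrib]
          refine Finset.sum_congr rfl fun k hk => ?_
          have hk' : k ≤ n := Nat.lt_succ_iff.mp (mem_range.mp hk)
          have h1 : fs (k+1) = fs k * (s - k) := prod_range_succ _ _
          have h2 : fu (n+1-k) = fu (n-k) * (u - (n-k : ℕ)) := by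
            rw [show n+1-k = (n-k)+1 by omega]
            exact prod_range_succ _ _
          rw [h1, h2, Nat.cast_sub hk']
          ring
      _ = ∏ i ∈ range (n+1), (s + u - i) := by
          rw [prod_range_succ, ← ih, Finset.sum_mul]

theorem stmt_2 (n : ℕ) (s t : ℂ)
    (ht : ∀ i : ℕ, 1 ≤ i → i ≤ n → t ≠ -(i : ℂ)) :
    ∑ k ∈ range (n + 1), (n.choose k : ℂ) * cchoose s k / cchoose (t + k) k =
      ∏ i ∈ Finset.Icc 1 n, (s + t + i) / (t + i) := by
  have hne : ∀ i ∈ Icc 1 n, t + (i : ℂ) ≠ 0 := by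
    intro i hi
    have := ht i (mem_Icc.mp hi).1 (mem_Icc.mp hi).2
    intro h
    exact this (by linear_combination h)
  have hB : ∀ k, k ≤ n → (∏ j ∈ Icc 1 k, (t + (j:ℂ))) ≠ 0 := by
    intro k hk
    refine Finset.prod_ne_zero_iff.mpr fun j hj => hne j ?_
    rw [mem_Icc] at hj ⊢
    omega
  have hD : (∏ j ∈ Icc 1 n, (t + (j:ℂ))) ≠ 0 := hB n le_rfl
  -- denominator of cchoose (t+k) k rewritten as product over Icc 1 k
  have hden : ∀ k : ℕ, ∏ i ∈ range k, (t + (k:ℂ) - (i:ℂ)) = ∏ j ∈ Icc 1 k, (t + j) := by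
    intro k
    rw [← Finset.Ico_add_one_right_eq_Icc, Finset.prod_Ico_eq_prod_range, ← Finset.prod_range_reflect]
    have hr : k + 1 - 1 = k := by omega
    rw [hr]
    refine Finset.prod_congr rfl fun i hi => ?_
    have hik : i < k := mem_range.mp hi
    rw [show k - 1 - i = k - (1+i) by omega, Nat.cast_sub (by omega : 1 + i ≤ k)]
    push_cast
    ring
  have hcc : ∀ k : ℕ, cchoose (t + (k:ℂ)) k = (∏ j ∈ Icc 1 k, (t + (j:ℂ))) / (k.factorial : ℂ) := by
    intro k
    rw [cchoose, ← hden k]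
  have hIcc : ∀ (c : ℂ) (k : ℕ), k ≤ n →
      ∏ j ∈ Icc (k+1) n, (c + (j:ℂ)) = ∏ i ∈ range (n-k), (c + (n:ℂ) - (i:ℂ)) := by
    intro c k hk
    rw [← Finset.Ico_add_one_right_eq_Icc, Finset.prod_Ico_eq_prod_range, ← Finset.prod_range_reflect]
    have hr : n + 1 - (k + 1) = n - k := by omega
    rw [hr]
    refine Finset.prod_congr rfl fun i hi => ?_
    have hik : i < n - k := mem_range.mp hi
    have h1 : k + 1 + (n - k - 1 - i) = n - i := by omega
    rw [h1, Nat.cast_sub (by omega : i ≤ n)]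
    ring
  -- split D over Icc 1 k and Icc (k+1) n
  have hsplit : ∀ k : ℕ, k ≤ n →
      (∏ j ∈ Icc 1 n, (t + (j:ℂ)))
        = (∏ j ∈ Icc 1 k, (t + (j:ℂ))) * ∏ j ∈ Icc (k+1) n, (t + (j:ℂ)) := by
    intro k hk
    rw [show (1:ℕ) = 0 + 1 from rfl, Finset.Icc_add_one_left_eq_Ioc, Finset.Icc_add_one_left_eq_Ioc, Nat.zero_add, Finset.Icc_add_one_left_eq_Ioc]
    exact (Finset.prod_Ioc_consecutive _ (Nat.zero_le k) hk).symm
  rw [Finset.prod_div_distrib, eq_div_iff hD, Finset.sum_mul]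
  have hterm : ∀ k ∈ range (n+1),
      (n.choose k : ℂ) * cchoose s k / cchoose (t + k) k * (∏ j ∈ Icc 1 n, (t + (j:ℂ)))
        = (n.choose k : ℂ) * (∏ i ∈ range k, (s - i)) *
            (∏ i ∈ range (n-k), (t + (n:ℂ) - (i:ℂ))) := by
    intro k hk
    have hk' : k ≤ n := Nat.lt_succ_iff.mp (mem_range.mp hk)
    rw [hsplit k hk', hcc k, cchoose, hIcc t k hk']
    have hf : (k.factorial : ℂ) ≠ 0 := Nat.cast_ne_zero.mpr k.factorial_ne_zero
    field_simp [hB k hk']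
  rw [Finset.sum_congr rfl hterm]
  have := vdm n s (t + (n:ℂ))
  have hfu : ∀ k ∈ range (n+1), (n.choose k : ℂ) * (∏ i ∈ range k, (s - i)) *
      (∏ i ∈ range (n-k), (t + (n:ℂ) - (i:ℂ)))
        = (n.choose k : ℂ) * (∏ i ∈ range k, (s - i)) *
      (∏ i ∈ range (n-k), ((t + (n:ℂ)) - (i:ℂ))) := by
    intro k hk; ring_nf
  rw [Finset.sum_congr rfl hfu, this]
  have h0 : ∏ j ∈ Icc (0+1) n, ((s+t) + (j:ℂ)) = ∏ i ∈ range (n-0), ((s+t) + (n:ℂ) - (i:ℂ)) :=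
    hIcc (s+t) 0 (Nat.zero_le n)
  simp only [Nat.zero_add, Nat.sub_zero] at h0
  rw [h0]
  exact Finset.prod_congr rfl fun i _ => by ring
end

section
/- Let n be a non-negative integer, let s be a complex number that is not a negative integer, and let p be a complex number that is not an integer. Then ∑_{k=0}^{n} (−1)^{n+k} · C(n,k) · C(s+k, k) · B(k, p) = B(n, p) · C(s+p, n), where for a natural number k, B(k,p) denotes Γ(k+1)/(Γ(p+1)·Γ(k−p+1)), C(s+p,n) = (s+p)(s+p−1)⋯(s+p−n+1)/n!, and C(n,k) is the ordinary binomial coefficient. -/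
open Finset

/-- Binomial coefficient `B(k,p) = Γ(k+1)/(Γ(p+1)·Γ(k-p+1))` for `k : ℕ`, `p : ℂ`. -/
noncomputable def gchoose (k : ℕ) (p : ℂ) : ℂ :=
  Complex.Gamma (k + 1) / (Complex.Gamma (p + 1) * Complex.Gamma ((k : ℂ) - p + 1))

noncomputable def AA (s : ℂ) (k : ℕ) : ℂ := ∏ i ∈ range k, (s + 1 + i)
noncomputable def BB (p : ℂ) (k n : ℕ) : ℂ := ∏ j ∈ Finset.Ico k n, ((j:ℂ) + 1 - p)

lemma A_succ (s : ℂ) (k : ℕ) : AA s (k+1) = (s+1) * AA (s+1) k := by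
  unfold AA
  rw [Finset.prod_range_succ', mul_comm]
  congr 1
  · norm_num
  · exact Finset.prod_congr rfl (fun i _ => by push_cast; ring)

lemma B_shift (p : ℂ) (k n : ℕ) : BB p (k+1) (n+1) = BB (p-1) k n := by
  unfold BB
  rw [Finset.prod_Ico_eq_prod_range, Finset.prod_Ico_eq_prod_range]
  simp only [Nat.succ_sub_succ]
  exact Finset.prod_congr rfl (fun i _ => by push_cast; ring)

lemma B_top (p : ℂ) (k n : ℕ) (h : k ≤ n) : BB p k (n+1) = BB p k n * ((n:ℂ)+1-p) := by
  unfold BB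
  exact Finset.prod_Ico_succ_top (by omega) _

lemma key (n : ℕ) : ∀ s p : ℂ,
    ∑ k ∈ range (n+1), (-1:ℂ)^(n+k) * (n.choose k : ℂ) * AA s k * BB p k n
    = ∏ i ∈ range n, (s + p - i) := by
  induction n with
  | zero => intro s p; simp [AA, BB]
  | succ n ih =>
    intro s p
    have hstep : ∑ k ∈ range (n+1+1), (-1:ℂ)^(n+1+k) * ((n+1).choose k : ℂ) * AA s k * BB p k (n+1)
        = (∑ k ∈ range (n+1), (-1:ℂ)^(n+k) * (n.choose k : ℂ) * AA s (k+1) * BB p (k+1) (n+1))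
          + ((∑ k ∈ range (n+1), (-1:ℂ)^(n+k) * (n.choose (k+1) : ℂ) * AA s (k+1) * BB p (k+1) (n+1))
             + (-1:ℂ)^(n+1) * BB p 0 (n+1)) := by
      rw [Finset.sum_range_succ']
      have h2 : ∑ k ∈ range (n+1), (-1:ℂ)^(n+1+(k+1)) * ((n+1).choose (k+1) : ℂ) * AA s (k+1) * BB p (k+1) (n+1)
          = (∑ k ∈ range (n+1), (-1:ℂ)^(n+k) * (n.choose k : ℂ) * AA s (k+1) * BB p (k+1) (n+1))
            + (∑ k ∈ range (n+1), (-1:ℂ)^(n+k) * (n.choose (k+1) : ℂ) * AA s (k+1) * BB p (k+1) (n+1)) := by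
        rw [← Finset.sum_add_distrib]
        refine Finset.sum_congr rfl (fun k _ => ?_)
        have hc : ((n+1).choose (k+1) : ℂ) = (n.choose k : ℂ) + (n.choose (k+1) : ℂ) := by
          rw [Nat.choose_succ_succ]; push_cast; ring
        rw [hc]; ring
      rw [h2]
      simp [AA]
      ring
    rw [hstep]
    have hS1 : ∑ k ∈ range (n+1), (-1:ℂ)^(n+k) * (n.choose k : ℂ) * AA s (k+1) * BB p (k+1) (n+1)
        = (s+1) * ∏ i ∈ range n, (s + p - i) := by
      have h3 : ∀ k ∈ range (n+1), (-1:ℂ)^(n+k) * (n.choose k : ℂ) * AA s (k+1) * BB p (k+1) (n+1)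
          = (s+1) * ((-1:ℂ)^(n+k) * (n.choose k : ℂ) * AA (s+1) k * BB (p-1) k n) := by
        intro k _
        rw [A_succ, B_shift]; ring
      rw [Finset.sum_congr rfl h3, ← Finset.mul_sum, ih (s+1) (p-1)]
      congr 1
      exact Finset.prod_congr rfl (fun i _ => by ring)
    rw [hS1]
    have hS2 : (∑ k ∈ range (n+1), (-1:ℂ)^(n+k) * (n.choose (k+1) : ℂ) * AA s (k+1) * BB p (k+1) (n+1))
          + (-1:ℂ)^(n+1) * BB p 0 (n+1)
        = -(((n:ℂ)+1-p) * ∏ i ∈ range n, (s + p - i)) := by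
      have h1 : ∀ k ∈ range (n+1), (-1:ℂ)^(n+k) * (n.choose (k+1) : ℂ) * AA s (k+1) * BB p (k+1) (n+1)
          = -(((n:ℂ)+1-p) * ((-1:ℂ)^(n+(k+1)) * (n.choose (k+1) : ℂ) * AA s (k+1) * BB p (k+1) n)) := by
        intro k hk
        rcases eq_or_lt_of_le (Nat.lt_succ_iff.mp (Finset.mem_range.mp hk)) with h | h
        · subst h; simp [Nat.choose_succ_self]
        · rw [B_top p (k+1) n (by omega)]; ring
      rw [Finset.sum_congr rfl h1, B_top p 0 n (Nat.zero_le n)]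
      have hT : (∑ k ∈ range (n+1), (-1:ℂ)^(n+(k+1)) * (n.choose (k+1) : ℂ) * AA s (k+1) * BB p (k+1) n)
          + (-1:ℂ)^n * BB p 0 n = ∏ i ∈ range n, (s + p - i) := by
        have hih := ih s p
        rw [Finset.sum_range_succ'] at hih
        rw [Finset.sum_range_succ]
        simp only [Nat.choose_succ_self, Nat.cast_zero]
        simp only [AA, BB, Nat.choose_zero_right, Nat.cast_one, prod_range_zero] at hih ⊢
        linear_combination hih
      rw [Finset.sum_neg_distrib, ← Finset.mul_sum]
      linear_combination (-((n:ℂ)+1-p)) * hT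
    rw [hS2, Finset.prod_range_succ]
    ring

lemma gamma_shift (z : ℂ) (hz : ∀ j : ℕ, z + j ≠ 0) (d : ℕ) :
    Complex.Gamma (z + d) = (∏ j ∈ range d, (z + j)) * Complex.Gamma z := by
  induction d with
  | zero => simp
  | succ d ih =>
    have h : z + ((d:ℕ)+1 : ℕ) = (z + d) + 1 := by push_cast; ring
    rw [h, Complex.Gamma_add_one _ (hz d), ih, prod_range_succ]
    ring

lemma cchoose_eq (s : ℂ) (k : ℕ) : cchoose (s + k) k = AA s k / k.factorial := by
  unfold cchoose AA
  congr 1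
  rw [← Finset.prod_range_reflect]
  refine Finset.prod_congr rfl fun j hj => ?_
  have hj' := Finset.mem_range.mp hj
  have h1 : k - 1 - j = k - (j+1) := by omega
  rw [h1, Nat.cast_sub (by omega)]
  push_cast; ring

theorem stmt_3 (n : ℕ) (s p : ℂ)
    (hs : ∀ m : ℕ, s ≠ -((m : ℂ) + 1)) (hp : ∀ m : ℤ, p ≠ (m : ℂ)) :
    ∑ k ∈ range (n + 1), (-1 : ℂ) ^ (n + k) * (n.choose k : ℂ) *
        cchoose (s + k) k * gchoose k p =
      gchoose n p * cchoose (s + p) n := by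
  have hΓp : Complex.Gamma (p + 1) ≠ 0 := by
    refine Complex.Gamma_ne_zero fun m => ?_
    intro h
    exact hp (-(m+1)) (by push_cast; linear_combination h)
  have hΓk : ∀ k : ℕ, Complex.Gamma ((k:ℂ) - p + 1) ≠ 0 := by
    intro k
    refine Complex.Gamma_ne_zero fun m => ?_
    intro h
    refine hp ((k:ℤ) + m + 1) ?_
    push_cast
    linear_combination -h
  have hBne : ∀ k : ℕ, BB p k n ≠ 0 := by
    intro k
    refine Finset.prod_ne_zero_iff.mpr fun j _ => ?_
    intro h
    exact hp ((j:ℤ)+1) (by push_cast; linear_combination -h)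
  have hfac : ∀ k, k ≤ n → Complex.Gamma ((n:ℂ) - p + 1) = BB p k n * Complex.Gamma ((k:ℂ) - p + 1) := by
    intro k hk
    have hz : ∀ j : ℕ, ((k:ℂ) - p + 1) + j ≠ 0 := by
      intro j h
      refine hp ((k:ℤ) + j + 1) ?_
      push_cast
      linear_combination -h
    have := gamma_shift ((k:ℂ) - p + 1) hz (n - k)
    have harg : ((k:ℂ) - p + 1) + ((n - k : ℕ) : ℂ) = (n:ℂ) - p + 1 := by
      rw [Nat.cast_sub hk]; ring
    rw [harg] at this
    rw [this]
    congr 1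
    rw [BB, Finset.prod_Ico_eq_prod_range]
    exact Finset.prod_congr rfl fun j _ => by push_cast; ring
  have hterm : ∀ k ∈ range (n+1),
      (-1 : ℂ) ^ (n + k) * (n.choose k : ℂ) * cchoose (s + k) k * gchoose k p
      = ((-1:ℂ)^(n+k) * (n.choose k : ℂ) * AA s k * BB p k n)
          / (Complex.Gamma (p+1) * Complex.Gamma ((n:ℂ) - p + 1)) := by
    intro k hk
    rw [cchoose_eq, gchoose, Complex.Gamma_nat_eq_factorial,
      hfac k (Nat.lt_succ_iff.mp (Finset.mem_range.mp hk))]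
    have hkf : (k.factorial : ℂ) ≠ 0 := Nat.cast_ne_zero.mpr k.factorial_ne_zero
    field_simp [hΓk k, hBne k]
  rw [Finset.sum_congr rfl hterm, ← Finset.sum_div, key n s p]
  rw [gchoose, Complex.Gamma_nat_eq_factorial, cchoose]
  have hnf : (n.factorial : ℂ) ≠ 0 := Nat.cast_ne_zero.mpr n.factorial_ne_zero
  rw [div_mul_div_comm, mul_comm ((n.factorial : ℂ)) _, mul_div_mul_right _ _ hnf]
end

section
/- Let n be a non-negative integer and let λ be a complex number such that λ + 1/2 is not equal to any of 1, 2, …, n. Then 4^n · C(λ, n) = C(2λ, n) · ∑_{k=0}^{n} C(n,k) · C(n−λ−1/2, k)/C(k−λ−1/2, k). -/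
open Finset

noncomputable def asc (a : ℂ) (k : ℕ) : ℂ := ∏ i ∈ range k, (a + i)

lemma prod_split (f : ℕ → ℂ) (k n : ℕ) (h : k ≤ n) :
    ∏ j ∈ range n, f j = (∏ j ∈ range k, f j) * ∏ i ∈ range (n-k), f (k+i) := by
  rw [← prod_range_add, Nat.add_sub_cancel' h]

lemma asc_succ (a : ℂ) (k : ℕ) : asc a (k+1) = asc a k * (a + k) :=
  prod_range_succ _ _

lemma vandermonde (a b : ℂ) : ∀ n : ℕ,
    ∑ k ∈ range (n+1), (n.choose k : ℂ) * (asc a k * asc b (n-k)) = asc (a+b) n := by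
  intro n; induction n with
  | zero => simp [asc]
  | succ n ih =>
    have h12 : (∑ k ∈ range (n+1), (n.choose k : ℂ) * (asc a (k+1) * asc b (n-k)))
        + (∑ k ∈ range (n+1), (n.choose k : ℂ) * (asc a k * asc b (n+1-k)))
        = asc (a+b) (n+1) := by
      rw [← Finset.sum_add_distrib]
      have : ∀ k ∈ range (n+1), (n.choose k : ℂ) * (asc a (k+1) * asc b (n-k))
          + (n.choose k : ℂ) * (asc a k * asc b (n+1-k))
          = ((n.choose k : ℂ) * (asc a k * asc b (n-k))) * ((a+b)+n) := by
        intro k hk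
        rw [mem_range] at hk
        have hk' : k ≤ n := by omega
        have h1 : n + 1 - k = (n - k) + 1 := by omega
        rw [asc_succ, h1, asc_succ]
        have h2 : ((n - k : ℕ) : ℂ) = (n : ℂ) - k := by
          push_cast [Nat.cast_sub hk']; ring
        rw [h2]; ring
      rw [Finset.sum_congr rfl this, ← Finset.sum_mul, ih, ← asc_succ]
    rw [Finset.sum_range_succ' _ (n+1)]
    simp only [Nat.succ_sub_succ, Nat.choose_succ_succ, Nat.cast_add, add_mul, Nat.choose_zero_right,
      Nat.cast_one, one_mul, Nat.sub_zero]
    rw [Finset.sum_add_distrib]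
    have hS3 : ∑ k ∈ range (n+1), ((n.choose (k+1) : ℂ)) * (asc a (k+1) * asc b (n-k))
        = ∑ k ∈ range n, ((n.choose (k+1) : ℂ)) * (asc a (k+1) * asc b (n-k)) := by
      rw [Finset.sum_range_succ]; simp
    have hS2 : ∑ k ∈ range (n+1), (n.choose k : ℂ) * (asc a k * asc b (n+1-k))
        = (∑ k ∈ range n, ((n.choose (k+1) : ℂ)) * (asc a (k+1) * asc b (n-k)))
          + asc b (n+1) := by
      rw [Finset.sum_range_succ' _ n]
      simp only [Nat.succ_sub_succ, Nat.choose_zero_right, Nat.cast_one, one_mul, Nat.sub_zero]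
      congr 1
      simp [asc]
    rw [hS3, ← h12, hS2]
    simp [asc]
    ring

lemma double_prod (l : ℂ) : ∀ n : ℕ, ∏ i ∈ range (2*n), (2*l - i)
    = ∏ i ∈ range n, ((2*l - 2*i) * (2*l - 2*i - 1)) := by
  intro n; induction n with
  | zero => simp
  | succ n ih =>
    rw [prod_range_succ, ← ih, show 2*(n+1) = 2*n+1+1 by ring, prod_range_succ, prod_range_succ]
    push_cast; ring

theorem stmt_4 (n : ℕ) (l : ℂ)
    (hl : ∀ i : ℕ, 1 ≤ i → i ≤ n → l + 1 / 2 ≠ (i : ℂ)) :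
    (4 : ℂ) ^ n * cchoose l n =
      cchoose (2 * l) n * ∑ k ∈ range (n + 1), (n.choose k : ℂ) *
        cchoose ((n : ℂ) - l - 1 / 2) k / cchoose ((k : ℂ) - l - 1 / 2) k := by
  set μ : ℂ := l + 1/2 with hμ
  set a : ℂ := μ - n with ha
  have hfac : ∀ k : ℕ, (k.factorial : ℂ) ≠ 0 := fun k => Nat.cast_ne_zero.mpr k.factorial_ne_zero
  have hP : ∀ k, k ≤ n → (∏ j ∈ range k, ((j:ℂ) + 1 - μ)) ≠ 0 := by
    intro k hk
    apply Finset.prod_ne_zero_iff.mpr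
    intro j hj; rw [mem_range] at hj
    intro h
    exact hl (j+1) (by omega) (by omega) (by push_cast; linear_combination -h)
  have hPn := hP n le_rfl
  have hA : ∀ k : ℕ, cchoose ((k:ℂ) - l - 1/2) k
      = (∏ j ∈ range k, ((j:ℂ) + 1 - μ)) / k.factorial := by
    intro k
    unfold cchoose
    congr 1
    rw [← prod_range_reflect (fun j => ((j:ℂ) + 1 - μ)) k]
    refine prod_congr rfl fun i hi => ?_
    rw [mem_range] at hi
    rw [Nat.cast_sub (by omega), Nat.cast_sub (by omega)]
    push_cast [hμ]; ring
  have hB : ∀ k : ℕ, cchoose ((n:ℂ) - l - 1/2) k = (-1)^k * asc a k / k.factorial := by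
    intro k
    unfold cchoose
    congr 1
    have e : ∀ i ∈ range k, ((n:ℂ) - l - 1/2 - i) = (-1) * (a + i) := by
      intro i _; rw [ha, hμ]; ring
    rw [prod_congr rfl e, prod_mul_distrib, prod_const, card_range, asc]
  have hterm : ∀ k ∈ range (n+1),
      (n.choose k : ℂ) * cchoose ((n:ℂ) - l - 1/2) k / cchoose ((k:ℂ) - l - 1/2) k
      = (-1)^n * ((n.choose k : ℂ) * (asc a k * asc a (n-k))) / (∏ j ∈ range n, ((j:ℂ) + 1 - μ)) := by
    intro k hk; rw [mem_range] at hk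
    have hk' : k ≤ n := by omega
    have hsplit : (∏ j ∈ range n, ((j:ℂ)+1-μ))
        = (∏ j ∈ range k, ((j:ℂ)+1-μ)) * asc ((k:ℂ)+1-μ) (n-k) := by
      rw [prod_split (fun j => ((j:ℂ)+1-μ)) k n hk']
      congr 1
      rw [asc]
      exact prod_congr rfl (fun i _ => by push_cast; ring)
    have hQ : asc ((k:ℂ)+1-μ) (n-k) = (-1)^(n-k) * asc a (n-k) := by
      rw [asc]
      have e : ∀ i ∈ range (n-k), ((k:ℂ)+1-μ+(i:ℂ)) = (-1) * (a + ((n-k-1-i : ℕ) : ℂ)) := by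
        intro i hi; rw [mem_range] at hi
        rw [Nat.cast_sub (by omega), Nat.cast_sub (by omega), Nat.cast_sub (by omega), ha]
        push_cast; ring
      rw [prod_congr rfl e, prod_mul_distrib, prod_const, card_range,
        prod_range_reflect (fun j => a + (j:ℂ)) (n-k), asc]
    have hDne : cchoose ((k:ℂ) - l - 1/2) k ≠ 0 := by
      rw [hA]; exact div_ne_zero (hP k hk') (hfac k)
    rw [div_eq_div_iff hDne hPn, hA, hB, hsplit, hQ]
    have hsign : ((-1:ℂ))^k * (-1)^(n-k) = (-1)^n := by
      rw [← pow_add]; congr 1; omega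
    field_simp
    rw [← hsign]; ring
  rw [Finset.sum_congr rfl hterm, ← Finset.sum_div, ← Finset.mul_sum]
  have hvdm : ∑ k ∈ range (n+1), (n.choose k : ℂ) * (asc a k * asc a (n-k)) = asc (a+a) n :=
    vandermonde a a n
  rw [hvdm]
  unfold cchoose
  have h1 : (∏ i ∈ range n, (2*l - (i:ℂ))) * asc (a+a) n = ∏ i ∈ range (2*n), (2*l - (i:ℂ)) := by
    rw [(two_mul n : 2*n = n + n), prod_range_add]
    congr 1
    rw [asc, ← prod_range_reflect (fun j => (a+a) + (j:ℂ)) n]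
    refine prod_congr rfl fun i hi => ?_
    rw [mem_range] at hi
    rw [Nat.cast_sub (by omega : i ≤ n - 1), Nat.cast_sub (by omega : 1 ≤ n), ha, hμ]
    push_cast; ring
  have h2 : (4:ℂ)^n * (∏ i ∈ range n, (l - (i:ℂ))) * (∏ j ∈ range n, ((j:ℂ)+1-μ))
      = (-1)^n * ∏ i ∈ range n, ((2*l-2*(i:ℂ)) * (2*l-2*(i:ℂ)-1)) := by
    rw [show (4:ℂ)^n = ∏ _i ∈ range n, (4:ℂ) by rw [prod_const, card_range],
      show ((-1:ℂ))^n = ∏ _i ∈ range n, (-1:ℂ) by rw [prod_const, card_range],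
      ← prod_mul_distrib, ← prod_mul_distrib, ← prod_mul_distrib]
    refine prod_congr rfl fun i _ => ?_
    rw [hμ]; ring
  have key : (4:ℂ)^n * (∏ i ∈ range n, (l - (i:ℂ))) * (∏ j ∈ range n, ((j:ℂ)+1-μ))
      = (∏ i ∈ range n, (2*l - (i:ℂ))) * ((-1)^n * asc (a+a) n) := by
    rw [h2, ← double_prod l n, ← h1]; ring
  field_simp [hPn, hfac n]
  have e1 : a * (1+1) = a + a := by ring
  have e2 : (∏ x ∈ range n, (l * 2 - (x:ℂ))) = ∏ i ∈ range n, (2*l - (i:ℂ)) := by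
    simp only [mul_comm l 2]
  rw [e1, e2]
  linear_combination key
end

section
/- Let n be a non-negative integer, let β be a complex number that is not a negative integer, and let x be a complex number. Then ∑_{k=0}^{n} C(n,k) · C(β+k, k) · x^k = ∑_{k=0}^{n} (−1)^{n+k} · C(n,k) · C(β+k, n) · (1+x)^k. -/
open Finset

open fwdDiff in
lemma cchoose_pascal (z : ℂ) (k : ℕ) :
    cchoose (z + 1) (k + 1) = cchoose z (k + 1) + cchoose z k := by
  have hf : ((k.factorial : ℂ)) ≠ 0 := by exact_mod_cast k.factorial_ne_zero
  have hf' : (((k+1).factorial : ℂ)) ≠ 0 := by exact_mod_cast (k+1).factorial_ne_zero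
  unfold cchoose
  have h1 : ∏ i ∈ Finset.range (k+1), (z + 1 - (i:ℂ)) =
      (∏ i ∈ Finset.range k, (z - i)) * (z + 1) := by
    rw [Finset.prod_range_succ' (fun i => z + 1 - (i:ℂ))]
    simp only [Nat.cast_add, Nat.cast_one, Nat.cast_zero]
    ring_nf
  have h2 : ∏ i ∈ Finset.range (k+1), (z - (i:ℂ)) =
      (∏ i ∈ Finset.range k, (z - i)) * (z - k) := Finset.prod_range_succ _ _
  have hk1 : ((k:ℂ) + 1) ≠ 0 := by
    have := Nat.cast_add_one_ne_zero (R := ℂ) k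
    exact_mod_cast this
  rw [h1, h2, Nat.factorial_succ]
  push_cast
  field_simp
  ring

open fwdDiff in
lemma fwdDiff_cchoose (j m : ℕ) :
    (Δ_[(1:ℂ)])^[m] (fun z => cchoose z (j + m)) = fun z => cchoose z j := by
  induction m with
  | zero => simp
  | succ m ih =>
    rw [Function.iterate_succ_apply]
    have : Δ_[(1:ℂ)] (fun z => cchoose z (j + (m+1))) = fun z => cchoose z (j + m) := by
      funext z
      simp only [fwdDiff]
      have := cchoose_pascal z (j + m)
      rw [show j + (m+1) = (j + m) + 1 from rfl, this]
      ring
    rw [this, ih]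

theorem key_sum (j m : ℕ) (y : ℂ) :
    ∑ i ∈ range (m + 1), (-1 : ℂ) ^ (m + i) * (m.choose i : ℂ) * cchoose (y + i) (j + m)
      = cchoose y j := by
  have h := fwdDiff_iter_eq_sum_shift (1 : ℂ) (fun z => cchoose z (j + m)) m y
  rw [fwdDiff_cchoose j m] at h
  have h' : cchoose y j = ∑ k ∈ range (m + 1),
      ((-1 : ℤ) ^ (m - k) * (m.choose k : ℤ)) • cchoose (y + k • (1:ℂ)) (j + m) := h
  rw [h']
  apply Finset.sum_congr rfl
  intro i hi
  rw [Finset.mem_range] at hi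
  have hsign : (-1 : ℂ) ^ (m + i) = (-1 : ℂ) ^ (m - i) := by
    rw [show m + i = (m - i) + 2 * i by omega, pow_add, pow_mul]
    simp
  rw [zsmul_eq_mul, nsmul_eq_mul, mul_one, hsign]
  push_cast
  ring

theorem stmt_5 (n : ℕ) (β x : ℂ) (hβ : ∀ m : ℕ, β ≠ -((m : ℂ) + 1)) :
    ∑ k ∈ range (n + 1), (n.choose k : ℂ) * cchoose (β + k) k * x ^ k =
      ∑ k ∈ range (n + 1), (-1 : ℂ) ^ (n + k) * (n.choose k : ℂ) *
        cchoose (β + k) n * (1 + x) ^ k := by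
  have hexp : ∀ k ∈ range (n + 1),
      (-1 : ℂ) ^ (n + k) * (n.choose k : ℂ) * cchoose (β + k) n * (1 + x) ^ k
      = ∑ j ∈ range (n + 1), (-1 : ℂ) ^ (n + k) * (n.choose k : ℂ) * cchoose (β + k) n *
          (x ^ j * (k.choose j : ℂ)) := by
    intro k hk
    rw [Finset.mem_range] at hk
    have h1 : (1 + x) ^ k = ∑ j ∈ range (n + 1), x ^ j * (k.choose j : ℂ) := by
      rw [add_comm, add_pow]
      simp only [one_pow, mul_one]
      refine Finset.sum_subset (Finset.range_subset_range.mpr ?_) ?_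
      · omega
      intro j _ hj'
      rw [Finset.mem_range, not_lt] at hj'
      rw [Nat.choose_eq_zero_of_lt (by omega)]
      simp
    rw [h1, Finset.mul_sum]
  rw [Finset.sum_congr rfl hexp, Finset.sum_comm]
  apply Finset.sum_congr rfl
  intro j hj
  rw [Finset.mem_range] at hj
  have hjn : j ≤ n := by omega
  set m := n - j with hm
  have hnm : n = j + m := by omega
  -- split the k-sum at j
  have hzero : ∀ k ∈ Finset.Ico 0 j,
      (-1 : ℂ) ^ (n + k) * (n.choose k : ℂ) * cchoose (β + k) n * (x ^ j * (k.choose j : ℂ))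
        = 0 := by
    intro k hk
    rw [Finset.mem_Ico] at hk
    simp [Nat.choose_eq_zero_of_lt hk.2]
  have hsplit : ∑ k ∈ range (n + 1),
      (-1 : ℂ) ^ (n + k) * (n.choose k : ℂ) * cchoose (β + k) n * (x ^ j * (k.choose j : ℂ))
      = ∑ k ∈ Finset.Ico j (n + 1),
      (-1 : ℂ) ^ (n + k) * (n.choose k : ℂ) * cchoose (β + k) n * (x ^ j * (k.choose j : ℂ)) := by
    rw [Finset.range_eq_Ico, ← Finset.sum_Ico_consecutive _ (Nat.zero_le j) (by omega),
      Finset.sum_eq_zero hzero, zero_add]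
  rw [hsplit, Finset.sum_Ico_eq_sum_range]
  have hcard : n + 1 - j = m + 1 := by omega
  rw [hcard]
  have hterm : ∀ i ∈ range (m + 1),
      (-1 : ℂ) ^ (n + (j + i)) * (n.choose (j + i) : ℂ) * cchoose (β + ((j + i : ℕ) : ℂ)) n *
        (x ^ j * ((j + i).choose j : ℂ))
      = ((n.choose j : ℂ) * x ^ j) *
          ((-1 : ℂ) ^ (m + i) * (m.choose i : ℂ) * cchoose ((β + j) + i) (j + m)) := by
    intro i hi
    rw [Finset.mem_range] at hi
    have hsign : (-1 : ℂ) ^ (n + (j + i)) = (-1 : ℂ) ^ (m + i) := by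
      rw [show n + (j + i) = 2 * j + (m + i) by omega, pow_add, pow_mul]
      simp
    have hchoose : (n.choose (j + i) : ℂ) * ((j + i).choose j : ℂ)
        = (n.choose j : ℂ) * (m.choose i : ℂ) := by
      have := Nat.choose_mul (n := n) (Nat.le_add_right j i)
      rw [show n - j = m from rfl, show j + i - j = i by omega] at this
      exact_mod_cast congrArg (Nat.cast (R := ℂ)) this
    have hc : cchoose (β + ((j + i : ℕ) : ℂ)) n = cchoose ((β + j) + i) (j + m) := by
      push_cast
      rw [hnm, ← add_assoc]
    rw [hsign, hc]
    calc (-1 : ℂ) ^ (m + i) * (n.choose (j + i) : ℂ) * cchoose ((β + j) + i) (j + m) *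
          (x ^ j * ((j + i).choose j : ℂ))
        = ((n.choose (j + i) : ℂ) * ((j + i).choose j : ℂ)) *
            ((-1 : ℂ) ^ (m + i) * cchoose ((β + j) + i) (j + m) * x ^ j) := by ring
      _ = ((n.choose j : ℂ) * (m.choose i : ℂ)) *
            ((-1 : ℂ) ^ (m + i) * cchoose ((β + j) + i) (j + m) * x ^ j) := by rw [hchoose]
      _ = _ := by ring
  rw [Finset.sum_congr rfl hterm, ← Finset.mul_sum, key_sum j m (β + j)]
  ring
end

section
/- For every non-negative integer n, the n-th harmonic number satisfies H_n = (1/2) · ∑_{k=0}^{n} (−1)^{n+k} · C(n,k) · C(n+k, k) · H_{n+k}, where C(a,b) denotes the ordinary binomial coefficient. -/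
open Finset

/-- The `n`-th harmonic number `H_n = ∑_{j=1}^n 1/j`, with `H_0 = 0`. -/
noncomputable def H (n : ℕ) : ℝ :=
  ∑ j ∈ Finset.range n, 1 / ((j : ℝ) + 1)

open Nat

lemma H_succ (n : ℕ) : H (n + 1) = H n + 1 / ((n : ℝ) + 1) := by
  simp [H, Finset.sum_range_succ]

lemma trin {n j i : ℕ} (hij : i ≤ j) (hjn : j ≤ n) :
    n.choose j * j.choose i = n.choose i * (n - i).choose (j - i) := by
  have h1 := Nat.choose_mul_factorial_mul_factorial hjn
  have h2 := Nat.choose_mul_factorial_mul_factorial hij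
  have h3 := Nat.choose_mul_factorial_mul_factorial (Nat.sub_le_sub_right hjn i)
  have h4 := Nat.choose_mul_factorial_mul_factorial (hij.trans hjn)
  have key : n.choose j * j.choose i * (i ! * (j - i)! * (n - j)!) =
      n.choose i * (n - i).choose (j - i) * (i ! * (j - i)! * (n - j)!) := by
    have e : (n - i) - (j - i) = n - j := by omega
    calc n.choose j * j.choose i * (i ! * (j - i)! * (n - j)!)
        = (j.choose i * i ! * (j - i)!) * n.choose j * (n-j)! := by ring
      _ = j ! * n.choose j * (n-j)! := by rw [h2]
      _ = n.choose j * j ! * (n-j)! := by ring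
      _ = n ! := h1
      _ = n.choose i * i ! * (n - i)! := h4.symm
      _ = n.choose i * i ! * ((n-i).choose (j-i) * (j-i)! * ((n-i)-(j-i))!) := by rw [h3]
      _ = n.choose i * i ! * ((n-i).choose (j-i) * (j-i)! * (n-j)!) := by rw [e]
      _ = n.choose i * (n - i).choose (j - i) * (i ! * (j - i)! * (n - j)!) := by ring
  have hpos : 0 < i ! * (j - i)! * (n - j)! :=
    Nat.mul_pos (Nat.mul_pos i.factorial_pos (j-i).factorial_pos) (n-j).factorial_pos
  exact Nat.eq_of_mul_eq_mul_right hpos key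

-- Vandermonde in the form we need

lemma vand (n m : ℕ) : ∑ j ∈ range (n+1), n.choose j * m.choose j = (n + m).choose n := by
  rw [Nat.add_choose_eq, Finset.Nat.sum_antidiagonal_eq_sum_range_succ_mk]
  rw [← Finset.sum_range_reflect]
  refine Finset.sum_congr rfl fun j hj => ?_
  simp only [Finset.mem_range] at hj
  simp only [Nat.add_sub_cancel]
  rw [Nat.choose_symm (by omega : j ≤ n)]

lemma vand' (n m : ℕ) :
    ∑ v ∈ range (n+1), n.choose v * m.choose (n - v) = (n + m).choose n := by
  rw [Nat.add_choose_eq, Finset.Nat.sum_antidiagonal_eq_sum_range_succ_mk]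

lemma negpow {a b : ℕ} (h : a % 2 = b % 2) : (-1:ℝ)^a = (-1:ℝ)^b := by
  rcases Nat.even_or_odd a with ha | ha
  · have hb : Even b := by rw [Nat.even_iff] at *; omega
    rw [ha.neg_one_pow, hb.neg_one_pow]
  · have hb : Odd b := by rw [Nat.odd_iff] at *; omega
    rw [ha.neg_one_pow, hb.neg_one_pow]

-- key combinatorial switch

lemma rowalt {N : ℕ} (h : N ≠ 0) :
    ∑ m ∈ range (N + 1), (-1 : ℝ) ^ m * (N.choose m : ℝ) = 0 := by
  have h0 := Int.alternating_sum_range_choose_of_ne h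
  have h1 : ((∑ i ∈ range (N + 1), (-1 : ℤ) ^ i * ↑(N.choose i) : ℤ) : ℝ) = 0 := by
    rw [h0]; norm_num
  push_cast at h1
  convert h1 using 2

lemma altprefix (N t : ℕ) :
    ∑ m ∈ range (t + 1), (-1 : ℝ) ^ m * ((N + 1).choose m : ℝ)
      = (-1) ^ t * (N.choose t : ℝ) := by
  induction t with
  | zero => simp
  | succ t ih =>
    rw [Finset.sum_range_succ, ih, Nat.choose_succ_succ]
    push_cast
    ring

lemma Fid (M : ℕ) : ∀ a : ℕ,
    ∑ t ∈ range (M + 1), (-1 : ℝ) ^ t * (M.choose t : ℝ) / ((a : ℝ) + 1 + t)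
      = (M ! : ℝ) * (a ! : ℝ) / ((a + 1 + M)! : ℝ) := by
  induction M with
  | zero =>
    intro a
    have h1 : ((a+1)! : ℝ) = ((a:ℝ)+1) * (a ! : ℝ) := by
      rw [Nat.factorial_succ]; push_cast; ring
    have h2 : ((a:ℝ)+1) ≠ 0 := by positivity
    simp [h1]
    field_simp
  | succ M ih =>
    intro a
    have ihA := ih a
    have ihB := ih (a + 1)
    have ihA' : ∑ t ∈ range (M + 2), (-1 : ℝ) ^ t * (M.choose t : ℝ) / ((a : ℝ) + 1 + t)
        = (M ! : ℝ) * (a ! : ℝ) / ((a + 1 + M)! : ℝ) := by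
      rw [Finset.sum_range_succ, Nat.choose_succ_self]
      simpa using ihA
    rw [Finset.sum_range_succ'] at ihA'
    have hneg : ∑ k ∈ range (M+1), (-1:ℝ)^(k+1) * (M.choose (k+1) : ℝ) / ((a:ℝ)+1+(↑(k+1):ℝ))
        = - ∑ t ∈ range (M + 1), (-1 : ℝ) ^ t * (M.choose (t+1) : ℝ) / ((a : ℝ) + 2 + t) := by
      rw [← Finset.sum_neg_distrib]
      refine Finset.sum_congr rfl fun t _ => ?_
      push_cast
      ring
    rw [hneg] at ihA'
    -- ihA' : -V + 1/(a+1)-ish = M! a!/(a+1+M)!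
    rw [Finset.sum_range_succ']
    have hsum : ∑ t ∈ range (M + 1),
        (-1 : ℝ) ^ (t+1) * ((M+1).choose (t+1) : ℝ) / ((a : ℝ) + 1 + (↑(t+1):ℝ))
        = ∑ t ∈ range (M + 1),
          (-((-1 : ℝ) ^ t * (M.choose t : ℝ) / ((↑(a+1):ℝ) + 1 + t))
           - (-1 : ℝ) ^ t * (M.choose (t+1) : ℝ) / ((a : ℝ) + 2 + t)) := by
      refine Finset.sum_congr rfl fun t _ => ?_
      rw [Nat.choose_succ_succ]
      push_cast
      ring
    rw [hsum, Finset.sum_sub_distrib, Finset.sum_neg_distrib, ihB]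
    -- now pure arithmetic
    have hV : ∑ t ∈ range (M + 1), (-1 : ℝ) ^ t * (M.choose (t+1) : ℝ) / ((a : ℝ) + 2 + t)
        = 1/((a:ℝ)+1) - (M ! : ℝ) * (a ! : ℝ) / ((a + 1 + M)! : ℝ) := by
      have h0 : ((-1:ℝ)) ^ 0 * (M.choose 0 : ℝ) / ((a : ℝ) + 1 + (0:ℕ)) = 1/((a:ℝ)+1) := by
        simp
      rw [h0] at ihA'
      linarith [ihA']
    rw [hV]
    have e1 : a + 1 + 1 + M = a + 2 + M := by ring
    have e2 : a + 1 + (M+1) = a + 2 + M := by ring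
    rw [e1, e2]
    have hP : ((a + 2 + M)! : ℝ) = ((a:ℝ) + 2 + M) * ((a + 1 + M)! : ℝ) := by
      have : a + 2 + M = (a + 1 + M) + 1 := by ring
      rw [this, Nat.factorial_succ]; push_cast; ring
    have hA : ((a+1)! : ℝ) = ((a:ℝ)+1) * (a ! : ℝ) := by
      rw [Nat.factorial_succ]; push_cast; ring
    have hM : ((M+1)! : ℝ) = ((M:ℝ)+1) * (M ! : ℝ) := by
      rw [Nat.factorial_succ]; push_cast; ring
    have hne1 : ((a + 1 + M)! : ℝ) ≠ 0 := by positivity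
    have hne2 : ((a:ℝ) + 2 + M) ≠ 0 := by positivity
    have hne3 : ((a:ℝ) + 1) ≠ 0 := by positivity
    rw [hP, hA, hM]
    push_cast
    field_simp
    simp only [Nat.choose_zero_right, Nat.cast_one]
    ring

lemma Hadd (a m : ℕ) : H (a + m) = H a + ∑ t ∈ range m, 1 / ((a : ℝ) + t + 1) := by
  induction m with
  | zero => simp [H]
  | succ m ih =>
    have : a + (m+1) = (a+m) + 1 := by ring
    rw [this]
    show H ((a+m) + 1) = _
    rw [H, Finset.sum_range_succ, ← H, ih, Finset.sum_range_succ]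
    push_cast
    ring

-- filter facts for the swap

lemma swaphelp {N : ℕ} (f : ℕ → ℝ) (g : ℕ → ℝ) :
    ∑ m ∈ range (N + 1), f m * ∑ t ∈ range m, g t
      = ∑ t ∈ range (N + 1), g t * ∑ m ∈ Ico (t+1) (N+1), f m := by
  have h1 : ∀ m ∈ range (N+1), f m * ∑ t ∈ range m, g t
      = ∑ t ∈ range (N+1), if t < m then f m * g t else 0 := by
    intro m hm
    simp only [Finset.mem_range] at hm
    rw [Finset.mul_sum, Finset.sum_ite, Finset.sum_const_zero, add_zero]
    apply Finset.sum_nbij' (fun t => t) (fun t => t) <;> simp_all <;> omega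
  rw [Finset.sum_congr rfl h1, Finset.sum_comm]
  refine Finset.sum_congr rfl fun t ht => ?_
  simp only [Finset.mem_range] at ht
  rw [Finset.mul_sum, Finset.sum_ite, Finset.sum_const_zero, add_zero]
  apply Finset.sum_nbij' (fun m => m) (fun m => m) <;>
    simp_all [Finset.mem_Ico] <;> first | omega | (intros; ring)

lemma E1 (N' a : ℕ) :
    ∑ m ∈ range (N' + 2), (-1 : ℝ) ^ m * ((N' + 1).choose m : ℝ) * H (a + m)
      = -((N' ! : ℝ) * (a ! : ℝ) / ((a + 1 + N')! : ℝ)) := by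
  have hrw : ∀ m ∈ range (N' + 2), (-1 : ℝ) ^ m * ((N' + 1).choose m : ℝ) * H (a + m)
      = (-1 : ℝ) ^ m * ((N' + 1).choose m : ℝ) * H a
        + ((-1 : ℝ) ^ m * ((N' + 1).choose m : ℝ)) * ∑ t ∈ range m, 1 / ((a : ℝ) + t + 1) := by
    intro m _
    rw [Hadd]
    ring
  rw [Finset.sum_congr rfl hrw, Finset.sum_add_distrib]
  have h1 : ∑ m ∈ range (N' + 2), (-1 : ℝ) ^ m * ((N' + 1).choose m : ℝ) * H a = 0 := by
    rw [← Finset.sum_mul, rowalt (Nat.succ_ne_zero N'), zero_mul]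
  rw [h1, zero_add]
  rw [swaphelp (fun m => (-1 : ℝ) ^ m * ((N' + 1).choose m : ℝ))
      (fun t => 1 / ((a : ℝ) + t + 1))]
  have h2 : ∀ t ∈ range (N' + 2),
      (1 / ((a : ℝ) + t + 1)) * ∑ m ∈ Ico (t+1) (N'+2), (-1 : ℝ) ^ m * ((N' + 1).choose m : ℝ)
      = -((-1 : ℝ) ^ t * (N'.choose t : ℝ) / ((a : ℝ) + 1 + t)) := by
    intro t ht
    simp only [Finset.mem_range] at ht
    rw [Finset.sum_Ico_eq_sub _ (by omega : t + 1 ≤ N' + 2)]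
    rw [rowalt (Nat.succ_ne_zero N'), altprefix]
    ring
  rw [Finset.sum_congr rfl h2, Finset.sum_neg_distrib]
  have h3 : ∑ t ∈ range (N' + 2), (-1 : ℝ) ^ t * (N'.choose t : ℝ) / ((a : ℝ) + 1 + t)
      = (N' ! : ℝ) * (a ! : ℝ) / ((a + 1 + N')! : ℝ) := by
    rw [Finset.sum_range_succ, Nat.choose_succ_self]
    simpa using Fid N' a
  rw [h3]

lemma L1 : ∀ N K : ℕ, K ≤ N →
    (N.choose K : ℝ) * (H N - H K)
      = ∑ j ∈ range (N - K), ((N - (j+1)).choose K : ℝ) / ((j : ℝ) + 1) := by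
  intro N
  induction N with
  | zero => intro K hK; interval_cases K; simp
  | succ N ih =>
    intro K hK
    match K with
    | 0 =>
      simp only [Nat.choose_zero_right, Nat.cast_one, one_mul, Nat.sub_zero, H]
      simp
    | K' + 1 =>
      rcases Nat.lt_or_ge K' N with h2 | h2
      · -- K' < N : main case
        have hK'N : K' ≤ N := h2.le
        have hrange : N + 1 - (K' + 1) = N - K' := by omega
        rw [hrange]
        have hterm : ∀ j ∈ range (N - K'),
            ((N + 1 - (j+1)).choose (K'+1) : ℝ) / ((j : ℝ) + 1)
            = ((N - (j+1)).choose K' : ℝ) / ((j : ℝ) + 1)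
              + ((N - (j+1)).choose (K'+1) : ℝ) / ((j : ℝ) + 1) := by
          intro j hj
          simp only [Finset.mem_range] at hj
          have e : N + 1 - (j+1) = (N - (j+1)) + 1 := by omega
          rw [e, Nat.choose_succ_succ]
          push_cast
          ring
        rw [Finset.sum_congr rfl hterm, Finset.sum_add_distrib]
        have ih1 := ih K' hK'N
        have ih2 := ih (K' + 1) h2
        have hpad : ∑ j ∈ range (N - K'), ((N - (j+1)).choose (K'+1) : ℝ) / ((j : ℝ) + 1)
            = ∑ j ∈ range (N - (K'+1)), ((N - (j+1)).choose (K'+1) : ℝ) / ((j : ℝ) + 1) := by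
          have e : N - K' = (N - (K'+1)) + 1 := by omega
          rw [e, Finset.sum_range_succ]
          have e2 : N - (N - (K'+1) + 1) = K' := by omega
          rw [e2, Nat.choose_succ_self]
          simp
        rw [hpad, ← ih1, ← ih2]
        have hpas : ((N+1).choose (K'+1) : ℝ) = (N.choose K' : ℝ) + (N.choose (K'+1) : ℝ) := by
          rw [Nat.choose_succ_succ]; push_cast; ring
        have hrt : (N.choose (K'+1) : ℝ) * ((K' : ℝ)+1) = (N.choose K' : ℝ) * ((N : ℝ) - K') := by
          have h3 : ((N.choose (K'+1) * (K'+1) : ℕ) : ℝ) = ((N.choose K' * (N - K') : ℕ) : ℝ) :=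
            congrArg _ (Nat.choose_succ_right_eq N K')
          push_cast [Nat.cast_sub hK'N] at h3
          linarith [h3]
        rw [H_succ, H_succ K', hpas]
        have hN1 : ((N:ℝ)+1) ≠ 0 := by positivity
        have hK1 : ((K':ℝ)+1) ≠ 0 := by positivity
        have key : ((N.choose K' : ℝ) + (N.choose (K'+1) : ℝ)) * (1/((N:ℝ)+1))
            = (N.choose K' : ℝ) * (1/((K':ℝ)+1)) := by
          rw [mul_one_div, mul_one_div, div_eq_div_iff hN1 hK1]
          linear_combination hrt
        linear_combination key
      · -- K' = N (since K'+1 ≤ N+1 forces K' ≤ N)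
        have : K' = N := by omega
        subst this
        simp

lemma lemma5 (j : ℕ) :
    ∑ i ∈ range j, (-1 : ℝ) ^ i * (j.choose (i+1) : ℝ) / ((i : ℝ) + 1) = H j := by
  induction j with
  | zero => simp [H]
  | succ j ih =>
    have hterm : ∀ i ∈ range (j+1),
        (-1 : ℝ) ^ i * ((j+1).choose (i+1) : ℝ) / ((i : ℝ) + 1)
        = (-1 : ℝ) ^ i * (j.choose (i+1) : ℝ) / ((i : ℝ) + 1)
          + ((-1 : ℝ) ^ i * ((j+1).choose (i+1) : ℝ)) * (1/((j:ℝ)+1)) := by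
      intro i _
      have hmul : ((j+1) * j.choose i : ℕ) = ((j+1).choose (i+1) * (i+1) : ℕ) :=
        Nat.add_one_mul_choose_eq j i
      have hmulR : ((j:ℝ)+1) * (j.choose i : ℝ) = ((j+1).choose (i+1) : ℝ) * ((i:ℝ)+1) := by
        have := congrArg (fun x : ℕ => (x : ℝ)) hmul
        push_cast at this
        linarith [this]
      have hcc : ((j+1).choose (i+1) : ℝ) = (j.choose i : ℝ) + (j.choose (i+1) : ℝ) := by
        rw [Nat.choose_succ_succ]; push_cast; ring
      have hi1 : ((i:ℝ)+1) ≠ 0 := by positivity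
      have hj1 : ((j:ℝ)+1) ≠ 0 := by positivity
      have e1 : ((-1 : ℝ) ^ i * ((j+1).choose (i+1) : ℝ)) * (1/((j:ℝ)+1))
          = (-1 : ℝ) ^ i * (j.choose i : ℝ) / ((i:ℝ)+1) := by
        rw [mul_one_div, div_eq_div_iff hj1 hi1]
        linear_combination (-(-1:ℝ)^i) * hmulR
      rw [e1, ← add_div, hcc]
      ring
    rw [Finset.sum_congr rfl hterm, Finset.sum_add_distrib]
    have h1 : ∑ i ∈ range (j+1), (-1 : ℝ) ^ i * (j.choose (i+1) : ℝ) / ((i : ℝ) + 1) = H j := by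
      rw [Finset.sum_range_succ, Nat.choose_succ_self]
      simpa using ih
    have h2 : ∑ i ∈ range (j+1), ((-1 : ℝ) ^ i * ((j+1).choose (i+1) : ℝ)) * (1/((j:ℝ)+1))
        = 1/((j:ℝ)+1) := by
      rw [← Finset.sum_mul]
      have h3 := rowalt (Nat.succ_ne_zero j)
      rw [Finset.sum_range_succ'] at h3
      have h4 : ∑ i ∈ range (j+1), (-1:ℝ)^(i+1) * ((j+1).choose (i+1) : ℝ)
          = - ∑ i ∈ range (j+1), (-1:ℝ)^i * ((j+1).choose (i+1) : ℝ) := by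
        rw [← Finset.sum_neg_distrib]
        exact Finset.sum_congr rfl fun i _ => by ring
      rw [h4] at h3
      simp only [pow_zero, Nat.choose_zero_right, Nat.cast_one, one_mul] at h3
      have h5 : ∑ i ∈ range (j+1), (-1:ℝ)^i * ((j+1).choose (i+1) : ℝ) = 1 := by linarith
      rw [h5, one_mul]
    rw [h1, h2, H_succ]

lemma lemma5p {j M : ℕ} (h : j ≤ M) :
    ∑ i ∈ range M, (-1 : ℝ) ^ i * (j.choose (i+1) : ℝ) / ((i : ℝ) + 1) = H j := by
  rw [← lemma5 j]
  symm
  apply Finset.sum_subset (Finset.range_subset_range.2 h)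
  intro i _ hi
  simp only [Finset.mem_range, not_lt] at hi
  rw [Nat.choose_eq_zero_of_lt (by omega)]
  simp

lemma hA (n : ℕ) : ∑ j ∈ range (n+1), (n.choose j : ℝ)^2 * (H n - H j)
    = ((2*n).choose n : ℝ) * (H (2*n) - H n) := by
  have step1 : ∀ j ∈ range (n+1), (n.choose j : ℝ)^2 * (H n - H j)
      = ∑ t ∈ range n, (n.choose j : ℝ) * (((n-(t+1)).choose j : ℝ) / ((t:ℝ)+1)) := by
    intro j hj
    simp only [Finset.mem_range] at hj
    have hL := L1 n j (by omega)
    have hpad : ∑ t ∈ range (n - j), ((n-(t+1)).choose j : ℝ) / ((t:ℝ)+1)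
        = ∑ t ∈ range n, ((n-(t+1)).choose j : ℝ) / ((t:ℝ)+1) := by
      apply Finset.sum_subset (Finset.range_subset_range.2 (by omega))
      intro t htn ht
      simp only [Finset.mem_range, not_lt] at ht htn
      rw [Nat.choose_eq_zero_of_lt (by omega)]
      simp
    have : (n.choose j : ℝ)^2 * (H n - H j)
        = (n.choose j : ℝ) * ((n.choose j : ℝ) * (H n - H j)) := by ring
    rw [this, hL, hpad, Finset.mul_sum]
  rw [Finset.sum_congr rfl step1, Finset.sum_comm]
  have step2 : ∀ t ∈ range n,
      ∑ j ∈ range (n+1), (n.choose j : ℝ) * (((n-(t+1)).choose j : ℝ) / ((t:ℝ)+1))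
      = (((2*n-(t+1)).choose n : ℝ)) / ((t:ℝ)+1) := by
    intro t ht
    simp only [Finset.mem_range] at ht
    have hv := vand n (n - (t+1))
    have hvR : ∑ j ∈ range (n+1), (n.choose j : ℝ) * ((n-(t+1)).choose j : ℝ)
        = ((n + (n - (t+1))).choose n : ℝ) := by exact_mod_cast congrArg (fun x : ℕ => (x:ℝ)) hv
    have e : n + (n - (t+1)) = 2*n - (t+1) := by omega
    rw [e] at hvR
    rw [← hvR, Finset.sum_div]
    exact Finset.sum_congr rfl fun j _ => by ring
  rw [Finset.sum_congr rfl step2]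
  have hL2 := L1 (2*n) n (by omega)
  have e2 : 2*n - n = n := by omega
  rw [e2] at hL2
  rw [← hL2]

lemma Esq (n : ℕ) : ∑ j ∈ range (n+1), (n.choose j : ℝ)^2 * H j
    = ((2*n).choose n : ℝ) * (2 * H n - H (2*n)) := by
  have hsq : ∑ j ∈ range (n+1), (n.choose j : ℝ)^2 = ((2*n).choose n : ℝ) := by
    have hv := vand n n
    have : n + n = 2*n := by omega
    rw [this] at hv
    have := congrArg (fun x : ℕ => (x:ℝ)) hv
    push_cast at this
    rw [← this]
    exact Finset.sum_congr rfl fun j _ => by ring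
  have h1 := hA n
  have h2 : ∑ j ∈ range (n+1), (n.choose j : ℝ)^2 * (H n - H j)
      = H n * ∑ j ∈ range (n+1), (n.choose j : ℝ)^2
        - ∑ j ∈ range (n+1), (n.choose j : ℝ)^2 * H j := by
    rw [Finset.mul_sum, ← Finset.sum_sub_distrib]
    exact Finset.sum_congr rfl fun j _ => by ring
  rw [h2, hsq] at h1
  linarith [h1]

lemma switch {n l v : ℕ} (hl : l ≤ n) (hv : v ≤ n) :
    n.choose l * l.choose (n - v) = n.choose v * v.choose (n - l) := by
  rcases Nat.lt_or_ge (l + v) n with h | h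
  · rw [Nat.choose_eq_zero_of_lt (show l < n - v by omega),
        Nat.choose_eq_zero_of_lt (show v < n - l by omega)]
    simp
  · rw [trin (show n - v ≤ l by omega) hl]
    have e1 : n - (n - v) = v := by omega
    rw [e1, Nat.choose_symm hv]
    congr 1
    have e2 : l - (n - v) = v - (n - l) := by omega
    rw [e2, Nat.choose_symm (show n - l ≤ v by omega)]

lemma Gsum (n : ℕ) :
    ∑ l ∈ range n, (-1:ℝ)^(n+l) * (n.choose l : ℝ)^2 *
      (((n-l-1)! : ℝ) * ((n+l)! : ℝ) / ((2*n)! : ℝ))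
    = H (2*n) - 2 * H n := by
  have hC0 : (0:ℝ) < ((2*n).choose n : ℝ) := by
    exact_mod_cast Nat.choose_pos (by omega : n ≤ 2*n)
  apply mul_left_cancel₀ (a := ((2*n).choose n : ℝ)) (ne_of_gt hC0)
  rw [Finset.mul_sum]
  have step1 : ∀ l ∈ range n,
      ((2*n).choose n : ℝ) * ((-1:ℝ)^(n+l) * (n.choose l : ℝ)^2 *
        (((n-l-1)! : ℝ) * ((n+l)! : ℝ) / ((2*n)! : ℝ)))
      = (-1:ℝ)^(n+l) * (n.choose l : ℝ) * ((n+l).choose n : ℝ) / ((n-l : ℕ) : ℝ) := by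
    intro l hl
    simp only [Finset.mem_range] at hl
    have hc1 : ((2*n).choose n : ℝ) = ((2*n)! : ℝ) / ((n ! : ℝ) * (n ! : ℝ)) := by
      rw [Nat.cast_choose ℝ (by omega : n ≤ 2*n), show 2*n - n = n by omega]
    have hc2 : ((n+l).choose n : ℝ) = ((n+l)! : ℝ) / ((n ! : ℝ) * (l ! : ℝ)) := by
      rw [Nat.cast_choose ℝ (by omega : n ≤ n + l), show n + l - n = l by omega]
    have hc3 : (n.choose l : ℝ) = (n ! : ℝ) / ((l ! : ℝ) * ((n-l)! : ℝ)) :=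
      Nat.cast_choose ℝ (by omega : l ≤ n)
    have hfac : ((n-l)! : ℝ) = ((n-l : ℕ) : ℝ) * ((n-l-1)! : ℝ) := by
      have e : n - l = (n - l - 1) + 1 := by omega
      have h7 : (n-l)! = (n - l) * (n-l-1)! := by
        conv_lhs => rw [e]
        rw [Nat.factorial_succ, ← e]
      exact_mod_cast congrArg (fun x : ℕ => (x:ℝ)) h7
    have h1 : (0:ℝ) < (n ! : ℝ) := by exact_mod_cast n.factorial_pos
    have h2 : (0:ℝ) < (l ! : ℝ) := by exact_mod_cast l.factorial_pos
    have h3 : (0:ℝ) < ((n-l-1)! : ℝ) := by exact_mod_cast (n-l-1).factorial_pos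
    have h4 : (0:ℝ) < ((2*n)! : ℝ) := by exact_mod_cast (2*n).factorial_pos
    have h5 : (0:ℝ) < ((n+l)! : ℝ) := by exact_mod_cast (n+l).factorial_pos
    have h6 : (0:ℝ) < ((n-l : ℕ) : ℝ) := by
      have : 0 < n - l := by omega
      exact_mod_cast this
    rw [hc1, hc2, hc3, hfac]
    field_simp
  rw [Finset.sum_congr rfl step1]
  -- expand (n+l).choose n via vand' and switch
  have step2 : ∀ l ∈ range n,
      (-1:ℝ)^(n+l) * (n.choose l : ℝ) * ((n+l).choose n : ℝ) / ((n-l : ℕ) : ℝ)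
      = ∑ v ∈ range (n+1),
          (n.choose v : ℝ)^2 * ((-1:ℝ)^(n+l) * (v.choose (n-l) : ℝ) / ((n-l : ℕ) : ℝ)) := by
    intro l hl
    simp only [Finset.mem_range] at hl
    have hv := vand' n l
    have hvR : (((n+l).choose n : ℕ) : ℝ)
        = ∑ v ∈ range (n+1), (n.choose v : ℝ) * (l.choose (n-v) : ℝ) := by
      rw [← hv]; push_cast; rfl
    rw [hvR, Finset.mul_sum, Finset.sum_div]
    refine Finset.sum_congr rfl fun v hv' => ?_
    simp only [Finset.mem_range] at hv'
    have hsw : (n.choose l : ℝ) * (l.choose (n-v) : ℝ) = (n.choose v : ℝ) * (v.choose (n-l) : ℝ) := by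
      exact_mod_cast congrArg (fun x : ℕ => (x:ℝ)) (switch (by omega : l ≤ n) (by omega : v ≤ n))
    have hX : ((n-l : ℕ) : ℝ) ≠ 0 := by
      have : 0 < n - l := by omega
      positivity
    field_simp
    linear_combination ((n.choose v : ℝ)) * hsw
  rw [Finset.sum_congr rfl step2, Finset.sum_comm]
  have step3 : ∀ v ∈ range (n+1),
      ∑ l ∈ range n,
        (n.choose v : ℝ)^2 * ((-1:ℝ)^(n+l) * (v.choose (n-l) : ℝ) / ((n-l : ℕ) : ℝ))
      = (n.choose v : ℝ)^2 * (- H v) := by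
    intro v hv'
    simp only [Finset.mem_range] at hv'
    rw [← Finset.mul_sum]
    congr 1
    rw [← Finset.sum_range_reflect]
    have hterm : ∀ l ∈ range n,
        (-1:ℝ)^(n+(n-1-l)) * (v.choose (n-(n-1-l)) : ℝ) / ((n-(n-1-l) : ℕ) : ℝ)
        = -((-1:ℝ)^l * (v.choose (l+1) : ℝ) / ((l:ℝ)+1)) := by
      intro l hl
      simp only [Finset.mem_range] at hl
      have e : n - (n-1-l) = l + 1 := by omega
      rw [e]
      have hp : (-1:ℝ)^(n+(n-1-l)) = -(-1:ℝ)^l := by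
        have : (-1:ℝ)^(n+(n-1-l)) = (-1:ℝ)^(l+1) := negpow (by omega)
        rw [this, pow_succ]
        ring
      rw [hp]
      push_cast
      ring
    rw [Finset.sum_congr rfl hterm, Finset.sum_neg_distrib,
        lemma5p (by omega : v ≤ n)]
  rw [Finset.sum_congr rfl step3]
  have : ∑ v ∈ range (n+1), (n.choose v : ℝ)^2 * (- H v)
      = -(∑ v ∈ range (n+1), (n.choose v : ℝ)^2 * H v) := by
    rw [← Finset.sum_neg_distrib]
    exact Finset.sum_congr rfl fun v _ => by ring
  rw [this, Esq]
  ring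

theorem stmt_7 (n : ℕ) :
    H n = (1 / 2) * ∑ k ∈ range (n + 1), (-1 : ℝ) ^ (n + k) *
      (n.choose k : ℝ) * ((n + k).choose k : ℝ) * H (n + k) := by
  have hS : ∑ k ∈ range (n + 1), (-1 : ℝ) ^ (n + k) *
      (n.choose k : ℝ) * ((n + k).choose k : ℝ) * H (n + k) = 2 * H n := by
    have step1 : ∀ k ∈ range (n+1),
        (-1 : ℝ) ^ (n + k) * (n.choose k : ℝ) * ((n + k).choose k : ℝ) * H (n + k)
        = ∑ l ∈ range (n+1),
            (-1 : ℝ) ^ (n + k) * (n.choose k : ℝ) * ((n.choose l : ℝ) * (k.choose l : ℝ))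
              * H (n + k) := by
      intro k hk
      have hsym : ((n+k).choose k : ℕ) = (n+k).choose n := by
        rw [← Nat.choose_symm (by omega : k ≤ n + k), show n + k - k = n by omega]
      have hv : ((n+k).choose n : ℝ) = ∑ l ∈ range (n+1), (n.choose l : ℝ) * (k.choose l : ℝ) := by
        rw [← vand n k]; push_cast; rfl
      rw [hsym, hv, Finset.mul_sum, Finset.sum_mul]
    rw [Finset.sum_congr rfl step1, Finset.sum_comm]
    have step2 : ∀ l ∈ range (n+1),
        ∑ k ∈ range (n+1),
          (-1 : ℝ) ^ (n + k) * (n.choose k : ℝ) * ((n.choose l : ℝ) * (k.choose l : ℝ))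
            * H (n + k)
        = (n.choose l : ℝ)^2 * ((-1:ℝ)^(n+l) *
            ∑ m ∈ range ((n-l) + 1), (-1 : ℝ) ^ m * ((n-l).choose m : ℝ) * H ((n+l) + m)) := by
      intro l hl
      simp only [Finset.mem_range] at hl
      have hzero : ∑ k ∈ range l,
          (-1 : ℝ) ^ (n + k) * (n.choose k : ℝ) * ((n.choose l : ℝ) * (k.choose l : ℝ))
            * H (n + k) = 0 := by
        apply Finset.sum_eq_zero
        intro k hk
        simp only [Finset.mem_range] at hk
        rw [Nat.choose_eq_zero_of_lt hk]
        simp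
      have hsplit : ∑ k ∈ range (n+1),
          (-1 : ℝ) ^ (n + k) * (n.choose k : ℝ) * ((n.choose l : ℝ) * (k.choose l : ℝ))
            * H (n + k)
          = ∑ k ∈ Ico l (n+1),
          (-1 : ℝ) ^ (n + k) * (n.choose k : ℝ) * ((n.choose l : ℝ) * (k.choose l : ℝ))
            * H (n + k) := by
        rw [Finset.range_eq_Ico, ← Finset.sum_Ico_consecutive _ (Nat.zero_le l) (by omega : l ≤ n+1),
            ← Finset.range_eq_Ico, hzero, zero_add]
      rw [hsplit, Finset.sum_Ico_eq_sum_range, show n + 1 - l = (n - l) + 1 by omega]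
      have hexp : (n.choose l : ℝ)^2 * ((-1:ℝ)^(n+l) *
          ∑ m ∈ range ((n-l) + 1), (-1 : ℝ) ^ m * ((n-l).choose m : ℝ) * H ((n+l) + m))
          = ∑ m ∈ range ((n-l) + 1), (n.choose l : ℝ)^2 * ((-1:ℝ)^(n+l) *
              ((-1 : ℝ) ^ m * ((n-l).choose m : ℝ) * H ((n+l) + m))) := by
        rw [Finset.mul_sum, Finset.mul_sum]
      rw [hexp]
      refine Finset.sum_congr rfl fun m hm => ?_
      simp only [Finset.mem_range] at hm
      have htr : (n.choose (l+m) : ℝ) * ((l+m).choose l : ℝ)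
          = (n.choose l : ℝ) * ((n-l).choose m : ℝ) := by
        have h0 := trin (show l ≤ l + m by omega) (show l + m ≤ n by omega)
        rw [show l + m - l = m by omega] at h0
        exact_mod_cast congrArg (fun x : ℕ => (x:ℝ)) h0
      have hp : (-1:ℝ)^(n + (l+m)) = (-1:ℝ)^(n+l) * (-1:ℝ)^m := by
        rw [← pow_add]
        exact negpow (by omega)
      have hH : H (n + (l + m)) = H ((n+l) + m) := by
        rw [show n + (l+m) = (n+l) + m by omega]
      rw [hp, hH]
      linear_combination ((-1:ℝ)^(n+l) * (-1:ℝ)^m * H ((n+l)+m) * (n.choose l : ℝ)) * htr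
    rw [Finset.sum_congr rfl step2]
    rw [Finset.sum_range_succ]
    have hlast : ((n.choose n : ℝ))^2 * ((-1:ℝ)^(n+n) *
        ∑ m ∈ range ((n-n) + 1), (-1 : ℝ) ^ m * ((n-n).choose m : ℝ) * H ((n+n) + m))
        = H (2*n) := by
      rw [Nat.choose_self, Nat.sub_self]
      have : (-1:ℝ)^(n+n) = 1 := by
        have : (-1:ℝ)^(n+n) = (-1:ℝ)^0 := negpow (by omega)
        simpa using this
      rw [this]
      simp [show n + n + 0 = 2*n by omega]
    rw [hlast]
    have hmain : ∀ l ∈ range n,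
        ((n.choose l : ℝ))^2 * ((-1:ℝ)^(n+l) *
          ∑ m ∈ range ((n-l) + 1), (-1 : ℝ) ^ m * ((n-l).choose m : ℝ) * H ((n+l) + m))
        = -((-1:ℝ)^(n+l) * (n.choose l : ℝ)^2 *
            (((n-l-1)! : ℝ) * ((n+l)! : ℝ) / ((2*n)! : ℝ))) := by
      intro l hl
      simp only [Finset.mem_range] at hl
      have he1 : ∑ m ∈ range ((n-l-1) + 2), (-1 : ℝ) ^ m * (((n-l-1) + 1).choose m : ℝ)
          * H ((n+l) + m)
          = -(((n-l-1) ! : ℝ) * ((n+l) ! : ℝ) / (((n+l) + 1 + (n-l-1))! : ℝ)) := E1 (n-l-1) (n+l)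
      rw [show (n+l) + 1 + (n-l-1) = 2*n by omega,
          show (n-l-1) + 2 = (n-l) + 1 by omega,
          show (n-l-1) + 1 = n - l by omega] at he1
      rw [he1]
      ring
    rw [Finset.sum_congr rfl hmain, Finset.sum_neg_distrib, Gsum]
    ring
  rw [hS]
  ring
end

section
/- Let n be a non-negative integer and let x be a complex number. Then ∑_{k=0}^{n} C(n,k) · C(2k,k) · x^k/4^k = (1/4^n) · ∑_{k=0}^{n} C(2k,k) · C(2n−2k, n−k) · (1+x)^k, where C(a,b) denotes the ordinary binomial coefficient. -/
open Finset Polynomial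

lemma dsucc (r : ℂ) (k : ℕ) :
    (descPochhammer ℤ (k+1)).smeval r = (descPochhammer ℤ k).smeval r * (r - k) := by
  rw [descPochhammer_succ_right]
  simp [Polynomial.smeval_mul, Polynomial.smeval_sub, Polynomial.smeval_X,
    Polynomial.smeval_natCast]

lemma hD (k : ℕ) : (descPochhammer ℤ k).smeval (-(1/2) : ℂ) =
    (k.factorial : ℂ) * ((2*k).choose k : ℂ) * (-(1/4))^k := by
  induction k with
  | zero => simp
  | succ k ih =>
    have key : ((k:ℂ)+1) * ((2*(k+1)).choose (k+1) : ℂ)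
        = 2*(2*(k:ℂ)+1) * ((2*k).choose k : ℂ) := by
      have := Nat.succ_mul_centralBinom_succ k
      rw [Nat.centralBinom, Nat.centralBinom] at this
      exact_mod_cast congrArg (Nat.cast : ℕ → ℂ) this
    rw [dsucc, ih, pow_succ, Nat.factorial_succ]
    push_cast
    linear_combination (k.factorial : ℂ) * (-(1:ℂ)/4)^k * (1/4) * key

lemma cHalf (k : ℕ) : Ring.choose (-(1/2) : ℂ) k = ((2*k).choose k : ℂ) * (-(1/4))^k := by
  have h := Ring.descPochhammer_eq_factorial_smul_choose (-(1/2) : ℂ) k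
  rw [hD, nsmul_eq_mul] at h
  have h0 : (k.factorial : ℂ) ≠ 0 := by exact_mod_cast k.factorial_ne_zero
  have h' : (k.factorial : ℂ) * (((2*k).choose k : ℂ) * (-(1/4))^k)
      = (k.factorial : ℂ) * Ring.choose (-(1/2) : ℂ) k := by rw [← h]; ring
  exact (mul_left_cancel₀ h0 h').symm

lemma hE (j : ℕ) : ∀ m : ℕ, (descPochhammer ℤ m).smeval (-(1:ℂ) - j) =
    (-1)^m * ((j+m).descFactorial m : ℂ) := by
  intro m
  induction m with
  | zero => simp
  | succ m ih =>
    rw [dsucc, ih]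
    have : j + (m+1) = (j+m) + 1 := by omega
    rw [this, Nat.succ_descFactorial_succ]
    push_cast
    ring

lemma cNeg (j m : ℕ) : Ring.choose (-(1:ℂ) - j) m = (-1)^m * ((j+m).choose m : ℂ) := by
  have h := Ring.descPochhammer_eq_factorial_smul_choose (-(1:ℂ) - j) m
  rw [hE, nsmul_eq_mul] at h
  have h0 : (m.factorial : ℂ) ≠ 0 := by exact_mod_cast m.factorial_ne_zero
  have hd : ((j+m).descFactorial m : ℂ) = (m.factorial : ℂ) * ((j+m).choose m : ℂ) := by
    exact_mod_cast congrArg (Nat.cast : ℕ → ℂ)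
      (Nat.descFactorial_eq_factorial_mul_choose (j+m) m)
  rw [hd] at h
  have h' : (m.factorial : ℂ) * ((-1)^m * ((j+m).choose m : ℂ))
      = (m.factorial : ℂ) * Ring.choose (-(1:ℂ) - j) m := by rw [← h]; ring
  exact (mul_left_cancel₀ h0 h').symm

lemma conv (j m : ℕ) :
    ∑ k ∈ range (j+m+1), (k.choose j : ℂ) *
      (Ring.choose (-(1/2):ℂ) k * Ring.choose (-(1/2):ℂ) (j+m-k))
    = Ring.choose (-(1/2):ℂ) j * ((-1)^m * ((j+m).choose j : ℂ)) := by
  have hsub : ∑ k ∈ Ico j (j+m+1), (k.choose j : ℂ) *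
        (Ring.choose (-(1/2):ℂ) k * Ring.choose (-(1/2):ℂ) (j+m-k))
      = ∑ k ∈ range (j+m+1), (k.choose j : ℂ) *
        (Ring.choose (-(1/2):ℂ) k * Ring.choose (-(1/2):ℂ) (j+m-k)) := by
    refine Finset.sum_subset (fun x hx => ?_) (fun x hx hnx => ?_)
    · simp only [Finset.mem_Ico, Finset.mem_range] at hx ⊢; omega
    · simp only [Finset.mem_Ico, Finset.mem_range] at hx hnx
      have : x < j := by omega
      rw [Nat.choose_eq_zero_of_lt this]
      simp
  rw [← hsub, Finset.sum_Ico_eq_sum_range]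
  have hlen : j + m + 1 - j = m + 1 := by omega
  rw [hlen]
  have hterm : ∀ i ∈ range (m+1), ((j+i).choose j : ℂ) *
        (Ring.choose (-(1/2):ℂ) (j+i) * Ring.choose (-(1/2):ℂ) (j+m-(j+i)))
      = Ring.choose (-(1/2):ℂ) j *
        (Ring.choose ((-(1/2):ℂ) - j) i * Ring.choose (-(1/2):ℂ) (m-i)) := by
    intro i _
    have h := Ring.choose_smul_choose (-(1/2):ℂ) (n := j+i) (k := j) (Nat.le_add_right j i)
    rw [nsmul_eq_mul, Nat.add_sub_cancel_left] at h
    have hidx : j + m - (j+i) = m - i := by omega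
    rw [hidx, ← mul_assoc, h]
    ring
  rw [Finset.sum_congr rfl hterm, ← Finset.mul_sum]
  congr 1
  have hvdm := Ring.add_choose_eq (r := (-(1/2):ℂ) - j) (s := (-(1/2):ℂ)) m (Commute.all _ _)
  rw [Finset.Nat.sum_antidiagonal_eq_sum_range_succ_mk] at hvdm
  have heq : (-(1/2):ℂ) - j + -(1/2) = -(1:ℂ) - j := by ring
  rw [heq, cNeg] at hvdm
  rw [← hvdm]
  have : (j+m).choose m = (j+m).choose j := by
    rw [← Nat.choose_symm (Nat.le_add_right j m), Nat.add_sub_cancel_left]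
  rw [this]

lemma keyT (j m : ℕ) :
    ∑ k ∈ range (j+m+1), (k.choose j : ℂ) * ((2*k).choose k : ℂ) *
        ((2*(j+m-k)).choose (j+m-k) : ℂ)
      = ((j+m).choose j : ℂ) * ((2*j).choose j : ℂ) * 4^m := by
  have h0 : ((-(1/4)):ℂ)^(j+m) ≠ 0 := pow_ne_zero _ (by norm_num)
  apply mul_left_cancel₀ h0
  have hsum : ∑ k ∈ range (j+m+1), (k.choose j : ℂ) *
        (Ring.choose (-(1/2):ℂ) k * Ring.choose (-(1/2):ℂ) (j+m-k))
      = (-(1/4):ℂ)^(j+m) * ∑ k ∈ range (j+m+1), (k.choose j : ℂ) * ((2*k).choose k : ℂ) *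
        ((2*(j+m-k)).choose (j+m-k) : ℂ) := by
    rw [Finset.mul_sum]
    refine Finset.sum_congr rfl (fun k hk => ?_)
    have hk' : k ≤ j + m := by
      have := Finset.mem_range.mp hk; omega
    have hp : (-(1/4):ℂ)^k * (-(1/4):ℂ)^(j+m-k) = (-(1/4):ℂ)^(j+m) := by
      rw [← pow_add]; congr 1; omega
    rw [cHalf, cHalf]
    linear_combination (k.choose j : ℂ) * ((2*k).choose k : ℂ) *
      ((2*(j+m-k)).choose (j+m-k) : ℂ) * hp
  rw [← hsum, conv, cHalf]
  have h4 : (-(1/4):ℂ)^m * 4^m = (-1)^m := by rw [← mul_pow]; norm_num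
  rw [pow_add]
  linear_combination (-(((2*j).choose j : ℂ) * (-(1/4):ℂ)^j * ((j+m).choose j : ℂ))) * h4

lemma keyT' (n j : ℕ) (hj : j ≤ n) :
    ∑ k ∈ range (n+1), (k.choose j : ℂ) * ((2*k).choose k : ℂ) *
        ((2*(n-k)).choose (n-k) : ℂ)
      = (n.choose j : ℂ) * ((2*j).choose j : ℂ) * 4^(n-j) := by
  have h := keyT j (n-j)
  rwa [Nat.add_sub_cancel' hj] at h

theorem stmt_8 (n : ℕ) (x : ℂ) :
    ∑ k ∈ range (n + 1), (n.choose k : ℂ) * ((2 * k).choose k : ℂ) * x ^ k / 4 ^ k =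
      (1 / 4 ^ n) * ∑ k ∈ range (n + 1), ((2 * k).choose k : ℂ) *
        ((2 * n - 2 * k).choose (n - k) : ℂ) * (1 + x) ^ k := by
  have hpow : ∀ k ≤ n, (1 + x)^k = ∑ j ∈ range (n+1), (k.choose j : ℂ) * x^j := by
    intro k hk
    calc (1+x)^k = ∑ j ∈ range (k+1), (k.choose j : ℂ) * x^j := by
          rw [add_comm (1:ℂ) x, add_pow]
          exact Finset.sum_congr rfl (fun j _ => by ring)
      _ = ∑ j ∈ range (n+1), (k.choose j : ℂ) * x^j := by
          refine Finset.sum_subset (Finset.range_subset_range.mpr (by omega)) (fun j hj hnj => ?_)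
          have : k < j := by
            simp only [Finset.mem_range] at hj hnj; omega
          rw [Nat.choose_eq_zero_of_lt this]; simp
  have step1 : ∑ k ∈ range (n + 1), ((2 * k).choose k : ℂ) *
        ((2 * n - 2 * k).choose (n - k) : ℂ) * (1 + x) ^ k
      = ∑ j ∈ range (n+1), (n.choose j : ℂ) * ((2*j).choose j : ℂ) * 4^(n-j) * x^j := by
    calc ∑ k ∈ range (n + 1), ((2 * k).choose k : ℂ) *
          ((2 * n - 2 * k).choose (n - k) : ℂ) * (1 + x) ^ k
        = ∑ k ∈ range (n+1), ∑ j ∈ range (n+1),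
            (k.choose j : ℂ) * ((2*k).choose k : ℂ) * ((2*(n-k)).choose (n-k) : ℂ) * x^j := by
          refine Finset.sum_congr rfl (fun k hk => ?_)
          have hk' : k ≤ n := by have := Finset.mem_range.mp hk; omega
          have h1 : 2*n - 2*k = 2*(n-k) := by omega
          rw [h1, hpow k hk', Finset.mul_sum]
          exact Finset.sum_congr rfl (fun j _ => by ring)
      _ = ∑ j ∈ range (n+1), ∑ k ∈ range (n+1),
            (k.choose j : ℂ) * ((2*k).choose k : ℂ) * ((2*(n-k)).choose (n-k) : ℂ) * x^j :=
          Finset.sum_comm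
      _ = ∑ j ∈ range (n+1), (n.choose j : ℂ) * ((2*j).choose j : ℂ) * 4^(n-j) * x^j := by
          refine Finset.sum_congr rfl (fun j hj => ?_)
          have hj' : j ≤ n := by have := Finset.mem_range.mp hj; omega
          rw [← Finset.sum_mul, keyT' n j hj']
  rw [step1, Finset.mul_sum]
  refine Finset.sum_congr rfl (fun j hj => ?_)
  have hj' : j ≤ n := by have := Finset.mem_range.mp hj; omega
  have h4 : (4:ℂ)^n = 4^j * 4^(n-j) := by rw [← pow_add]; congr 1; omega
  have h4j : (4:ℂ)^j ≠ 0 := pow_ne_zero _ (by norm_num)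
  have h4nj : (4:ℂ)^(n-j) ≠ 0 := pow_ne_zero _ (by norm_num)
  rw [h4]
  field_simp
end

section
/- Let n be a non-negative integer and let t be a nonzero complex number. Then the n-th Legendre polynomial P_n satisfies P_n((t²+1)/(2t)) = t^{−n} · ∑_{k=0}^{n} C(n,k) · C(2k,k) · ((t²−1)/4)^k, where C(a,b) denotes the ordinary binomial coefficient. -/
open Finset

section Aux
open Polynomial

lemma leg9_choose_swap {m a b : ℕ} (h : a + b ≤ m) :
    m.choose a * (m - a).choose b = m.choose b * (m - b).choose a := by
  have h1 := Nat.choose_mul (n := m) (Nat.le_add_right a b)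
  have h2 := Nat.choose_mul (n := m) (Nat.le_add_left b a)
  rw [Nat.add_sub_cancel_left] at h1
  rw [Nat.add_sub_cancel] at h2
  rw [← h1, ← h2, Nat.choose_symm_add]

lemma leg9_N2 {n k j : ℕ} (hjk : 2*j ≤ k) (hkn : k ≤ n) :
    n.choose (2*j) * (n - 2*j).choose (k - 2*j) = n.choose k * k.choose (2*j) :=
  (Nat.choose_mul (n := n) hjk).symm

lemma leg9_N1 {n k j : ℕ} (hjk : j ≤ k) (hkn : k ≤ n) :
    n.choose (2*j) * (2*j).choose j * (n - 2*j).choose (k - j)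
      = n.choose k * k.choose j * (n - k).choose j := by
  by_cases h2 : 2*j ≤ n
  · have hj2 : j ≤ 2*j := by omega
    have e1 : n.choose (2*j) * (2*j).choose j = n.choose j * (n - j).choose j := by
      have := Nat.choose_mul (n := n) (k := 2*j) hj2
      simpa [two_mul, Nat.add_sub_cancel_left] using this
    have e2 : n.choose k * k.choose j = n.choose j * (n - j).choose (k - j) :=
      Nat.choose_mul (n := n) hjk
    rw [e1, e2]
    by_cases h3 : k + j ≤ n
    · have := leg9_choose_swap (m := n - j) (a := j) (b := k - j) (by omega)
      have hnj : n - j - j = n - 2*j := by omega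
      have hnk : n - j - (k - j) = n - k := by omega
      rw [hnj, hnk] at this
      rw [mul_assoc, this, mul_assoc]
    · have z1 : (n - 2*j).choose (k - j) = 0 := Nat.choose_eq_zero_of_lt (by omega)
      have z2 : (n - k).choose j = 0 := Nat.choose_eq_zero_of_lt (by omega)
      rw [z1, z2, mul_zero, mul_zero]
  · have z1 : n.choose (2*j) = 0 := Nat.choose_eq_zero_of_lt (by omega)
    have z2 : (n - k).choose j = 0 := Nat.choose_eq_zero_of_lt (by omega)
    rw [z1, z2, mul_zero, zero_mul, zero_mul]

lemma leg9_N3 {n k : ℕ} (hkn : k ≤ n) :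
    ∑ j ∈ range (n+1), k.choose j * (n-k).choose j = n.choose k := by
  have h := Nat.add_choose_eq k (n - k) k
  rw [Nat.add_sub_cancel' hkn, Nat.sum_antidiagonal_eq_sum_range_succ_mk] at h
  dsimp only at h
  have h2 : ∑ i ∈ range (k+1), k.choose i * (n-k).choose (k - i)
      = ∑ j ∈ range (k+1), k.choose j * (n-k).choose j := by
    rw [← sum_range_reflect]
    refine sum_congr rfl fun i hi => ?_
    rw [mem_range] at hi
    have e1 : k + 1 - 1 - i = k - i := by omega
    have e2 : k - (k - i) = i := by omega
    rw [e1, e2, Nat.choose_symm (by omega : i ≤ k)]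
  have h3 : n.choose k = ∑ j ∈ range (k+1), k.choose j * (n-k).choose j := by
    rw [h]; exact h2
  rw [h3]
  symm
  apply sum_subset (range_subset_range.2 (Nat.succ_le_succ hkn))
  intro j _ hj
  rw [mem_range, not_lt] at hj
  rw [Nat.choose_eq_zero_of_lt (by omega), zero_mul]

lemma leg9_coeff_sq_add_one_pow (N m : ℕ) :
    ((X^2 + 1 : Polynomial ℕ)^N).coeff m
      = if 2 ∣ m then N.choose (m/2) else 0 := by
  have e : (X^2 + 1 : Polynomial ℕ) = expand ℕ 2 (X + 1) := by
    simp [expand_X]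
  rw [e, ← map_pow, coeff_expand two_pos, coeff_X_add_one_pow, Nat.cast_id]

lemma leg9_N4aux (k : ℕ) :
    (2*k).choose k = ∑ i ∈ range (k+1),
      (2^i * k.choose i) * (if 2 ∣ (k - i) then (k-i).choose ((k-i)/2) else 0) := by
  have e1 : ((X + 1 : Polynomial ℕ))^(2*k) = (2*X + (X^2+1))^k := by
    rw [pow_mul]; congr 1; ring
  have e2 := add_pow (2*X : Polynomial ℕ) (X^2+1) k
  have e3 : (2*k).choose k = (((2*X + (X^2+1) : Polynomial ℕ))^k).coeff k := by
    rw [← e1, coeff_X_add_one_pow, Nat.cast_id]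
  rw [e3, e2, finset_sum_coeff]
  refine sum_congr rfl fun i hi => ?_
  rw [mem_range, Nat.lt_succ_iff] at hi
  have e4 : (2*X : Polynomial ℕ)^i * (X^2+1)^(k-i) * (k.choose i : Polynomial ℕ)
      = (2^i * k.choose i) • (X^i * (X^2+1)^(k-i)) := by
    rw [nsmul_eq_mul]
    push_cast
    ring
  rw [e4, coeff_smul, smul_eq_mul]
  congr 1
  have e6 := coeff_X_pow_mul ((X^2+1 : Polynomial ℕ)^(k-i)) i (k-i)
  rw [show (k - i) + i = k from by omega] at e6
  rw [e6, leg9_coeff_sq_add_one_pow]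

lemma leg9_N4 (k : ℕ) :
    ∑ j ∈ range (k+1), k.choose (2*j) * (2*j).choose j * 2^(k-2*j) = (2*k).choose k := by
  rw [leg9_N4aux]
  have step : ∀ m ∈ range (k+1),
      (2^(k+1-1-m) * k.choose (k+1-1-m)) *
        (if 2 ∣ (k - (k+1-1-m)) then (k - (k+1-1-m)).choose ((k - (k+1-1-m))/2) else 0)
      = ∑ j ∈ range (k+1), (if 2*j = m then k.choose (2*j) * (2*j).choose j * 2^(k-2*j) else 0) := by
    intro m hm
    rw [mem_range, Nat.lt_succ_iff] at hm
    have e1 : k + 1 - 1 - m = k - m := by omega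
    have e2 : k - (k - m) = m := by omega
    rw [e1, e2]
    by_cases h2 : 2 ∣ m
    · obtain ⟨j0, rfl⟩ := h2
      have hj0 : j0 ∈ range (k+1) := by rw [mem_range]; omega
      rw [if_pos ⟨j0, rfl⟩]
      have e3 : ∀ j ∈ range (k+1), (if 2*j = 2*j0 then k.choose (2*j) * (2*j).choose j * 2^(k-2*j) else 0)
          = (if j = j0 then k.choose (2*j) * (2*j).choose j * 2^(k-2*j) else 0) := by
        intro j _
        exact if_congr (by omega) rfl rfl
      rw [sum_congr rfl e3, sum_ite_eq' (range (k+1)) j0, if_pos hj0]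
      have e4 : 2 * j0 / 2 = j0 := by omega
      rw [e4, Nat.choose_symm hm]
      ring
    · rw [if_neg h2, mul_zero]
      symm
      apply sum_eq_zero
      intro j _
      rw [if_neg (by intro hc; exact h2 ⟨j, hc.symm⟩)]
  conv_rhs => rw [← sum_range_reflect]
  rw [sum_congr rfl step, sum_comm]
  refine sum_congr rfl fun j hj => ?_
  rw [mem_range, Nat.lt_succ_iff] at hj
  rw [sum_ite_eq (range (k+1)) (2*j) (fun _ => k.choose (2*j) * (2*j).choose j * 2^(k-2*j))]
  by_cases h : 2*j ≤ k
  · rw [if_pos (by rw [mem_range]; omega)]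
  · rw [if_neg (by rw [mem_range]; omega), Nat.choose_eq_zero_of_lt (by omega), zero_mul, zero_mul]

lemma leg9_filt (n j : ℕ) : filter (fun k => 2*j ≤ k) (range (n+1)) = Ico (2*j) (n+1) := by
  ext k
  simp only [mem_filter, mem_range, mem_Ico]
  omega

lemma leg9_filt1 (n j : ℕ) : filter (fun k => j ≤ k) (range (n+1)) = Ico j (n+1) := by
  ext k
  simp only [mem_filter, mem_range, mem_Ico]
  omega

lemma leg9_part2 (n : ℕ) (w : ℂ) :
    ∑ j ∈ range (n+1), (n.choose (2*j) : ℂ) * ((2*j).choose j : ℂ) * w^(2*j) * (1+2*w)^(n-2*j)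
    = ∑ k ∈ range (n+1), (n.choose k : ℂ) * ((2*k).choose k : ℂ) * w^k := by
  have step : ∀ j ∈ range (n+1),
      (n.choose (2*j) : ℂ) * ((2*j).choose j : ℂ) * w^(2*j) * (1+2*w)^(n-2*j)
      = ∑ k ∈ range (n+1), (if 2*j ≤ k then (n.choose (2*j) : ℂ) * ((2*j).choose j : ℂ)
          * ((n-2*j).choose (k-2*j) : ℂ) * 2^(k-2*j) * w^k else 0) := by
    intro j _
    rw [← Finset.sum_filter, leg9_filt n j]
    by_cases h2 : 2*j ≤ n
    · calc (n.choose (2*j) : ℂ) * ((2*j).choose j : ℂ) * w^(2*j) * (1+2*w)^(n-2*j)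
          = ∑ i ∈ range (n-2*j+1), (n.choose (2*j) : ℂ) * ((2*j).choose j : ℂ)
              * ((n-2*j).choose i : ℂ) * 2^i * w^(2*j+i) := by
            rw [add_comm (1:ℂ) (2*w), add_pow, mul_sum]
            refine sum_congr rfl fun i _ => ?_
            ring
        _ = ∑ k ∈ Ico (2*j) (n+1), (n.choose (2*j) : ℂ) * ((2*j).choose j : ℂ)
              * ((n-2*j).choose (k-2*j) : ℂ) * 2^(k-2*j) * w^k := by
            rw [sum_Ico_eq_sum_range, show n + 1 - 2*j = n - 2*j + 1 from by omega]
            refine sum_congr rfl fun i _ => ?_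
            rw [Nat.add_sub_cancel_left]
    · rw [Nat.choose_eq_zero_of_lt (by omega), Ico_eq_empty (by omega), sum_empty,
        Nat.cast_zero, zero_mul, zero_mul, zero_mul]
  rw [sum_congr rfl step, sum_comm]
  refine sum_congr rfl fun k hk => ?_
  rw [mem_range, Nat.lt_succ_iff] at hk
  have term : ∀ j ∈ range (n+1),
      (if 2*j ≤ k then (n.choose (2*j) : ℂ) * ((2*j).choose j : ℂ)
          * ((n-2*j).choose (k-2*j) : ℂ) * 2^(k-2*j) * w^k else 0)
      = ((n.choose k : ℂ) * w^k) * ((k.choose (2*j) * (2*j).choose j * 2^(k-2*j) : ℕ) : ℂ) := by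
    intro j _
    by_cases h : 2*j ≤ k
    · rw [if_pos h]
      have hn := leg9_N2 h hk
      have hc := congrArg (Nat.cast (R := ℂ)) hn
      push_cast at hc ⊢
      linear_combination (((2*j).choose j : ℂ) * 2^(k-2*j) * w^k) * hc
    · rw [if_neg h, show k.choose (2*j) = 0 from Nat.choose_eq_zero_of_lt (by omega)]
      simp
  rw [sum_congr rfl term, ← mul_sum]
  have shrink : ∑ j ∈ range (n+1), ((k.choose (2*j) * (2*j).choose j * 2^(k-2*j) : ℕ) : ℂ)
      = (((2*k).choose k : ℕ) : ℂ) := by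
    rw [← Nat.cast_sum, ← leg9_N4 k]
    congr 1
    symm
    apply sum_subset (range_subset_range.2 (Nat.succ_le_succ hk))
    intro j _ hj
    rw [mem_range, not_lt] at hj
    rw [Nat.choose_eq_zero_of_lt (by omega), zero_mul, zero_mul]
  rw [shrink]
  ring

lemma leg9_part1 (n : ℕ) (A B : ℂ) :
    ∑ j ∈ range (n+1), (n.choose (2*j) : ℂ) * ((2*j).choose j : ℂ) * (A*B)^j * (A+B)^(n-2*j)
    = ∑ k ∈ range (n+1), (n.choose k : ℂ)^2 * A^k * B^(n-k) := by
  have step : ∀ j ∈ range (n+1),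
      (n.choose (2*j) : ℂ) * ((2*j).choose j : ℂ) * (A*B)^j * (A+B)^(n-2*j)
      = ∑ k ∈ range (n+1), (if j ≤ k then (n.choose (2*j) : ℂ) * ((2*j).choose j : ℂ)
          * ((n-2*j).choose (k-j) : ℂ) * A^k * B^(n-k) else 0) := by
    intro j hj
    rw [mem_range, Nat.lt_succ_iff] at hj
    rw [← Finset.sum_filter, leg9_filt1 n j]
    by_cases h2 : 2*j ≤ n
    · calc (n.choose (2*j) : ℂ) * ((2*j).choose j : ℂ) * (A*B)^j * (A+B)^(n-2*j)
          = ∑ i ∈ range (n-2*j+1), (n.choose (2*j) : ℂ) * ((2*j).choose j : ℂ)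
              * ((n-2*j).choose i : ℂ) * A^(j+i) * B^(n-(j+i)) := by
            rw [add_pow, mul_sum]
            refine sum_congr rfl fun i hi => ?_
            rw [mem_range, Nat.lt_succ_iff] at hi
            rw [show n-(j+i) = (n-2*j-i)+j from by omega, mul_pow, pow_add, pow_add]
            ring
        _ = ∑ i ∈ range (n+1-j), (n.choose (2*j) : ℂ) * ((2*j).choose j : ℂ)
              * ((n-2*j).choose i : ℂ) * A^(j+i) * B^(n-(j+i)) := by
            apply sum_subset (range_subset_range.2 (by omega))
            intro i _ hi
            rw [mem_range, not_lt] at hi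
            rw [show (n-2*j).choose i = 0 from Nat.choose_eq_zero_of_lt (by omega)]
            simp
        _ = ∑ k ∈ Ico j (n+1), (n.choose (2*j) : ℂ) * ((2*j).choose j : ℂ)
              * ((n-2*j).choose (k-j) : ℂ) * A^k * B^(n-k) := by
            rw [sum_Ico_eq_sum_range]
            refine sum_congr rfl fun i _ => ?_
            rw [Nat.add_sub_cancel_left]
    · rw [show n.choose (2*j) = 0 from Nat.choose_eq_zero_of_lt (by omega)]
      symm
      rw [Nat.cast_zero, zero_mul, zero_mul, zero_mul]
      apply sum_eq_zero
      intro k _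
      simp
  rw [sum_congr rfl step, sum_comm]
  refine sum_congr rfl fun k hk => ?_
  rw [mem_range, Nat.lt_succ_iff] at hk
  have term : ∀ j ∈ range (n+1),
      (if j ≤ k then (n.choose (2*j) : ℂ) * ((2*j).choose j : ℂ)
          * ((n-2*j).choose (k-j) : ℂ) * A^k * B^(n-k) else 0)
      = ((n.choose k : ℂ) * A^k * B^(n-k)) * ((k.choose j * (n-k).choose j : ℕ) : ℂ) := by
    intro j _
    by_cases h : j ≤ k
    · rw [if_pos h]
      have hc := congrArg (Nat.cast (R := ℂ)) (leg9_N1 h hk)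
      push_cast at hc ⊢
      linear_combination (A^k * B^(n-k)) * hc
    · rw [if_neg h, show k.choose j = 0 from Nat.choose_eq_zero_of_lt (by omega)]
      simp
  rw [sum_congr rfl term, ← mul_sum, ← Nat.cast_sum, leg9_N3 hk]
  ring

lemma leg9_key (n : ℕ) (x : ℂ) :
    ∑ k ∈ range (n+1), (n.choose k : ℂ)^2 * (x^2)^k * ((1+x)^2)^(n-k)
    = ∑ k ∈ range (n+1), (n.choose k : ℂ) * ((2*k).choose k : ℂ) * (x*(1+x))^k := by
  rw [← leg9_part1 n (x^2) ((1+x)^2), ← leg9_part2 n (x*(1+x))]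
  refine sum_congr rfl fun j _ => ?_
  rw [show (x^2*((1+x)^2) : ℂ) = (x*(1+x))^2 from by ring, ← pow_mul,
      show (x^2+(1+x)^2 : ℂ) = 1+2*(x*(1+x)) from by ring]

lemma leg9_polyIter (k : ℕ) (p : Polynomial ℂ) :
    iteratedDeriv k (fun y : ℂ => p.eval y) = fun x => ((derivative)^[k] p).eval x := by
  induction k generalizing p with
  | zero => funext x; simp
  | succ k ih =>
    rw [iteratedDeriv_succ']
    have h : deriv (fun y : ℂ => p.eval y) = fun y => (derivative p).eval y :=
      funext fun y => Polynomial.deriv p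
    rw [h, ih]
    funext x
    rw [Function.iterate_succ_apply]

lemma leg9_coefN {n k : ℕ} (hk : k ≤ n) :
    n.choose k * n.descFactorial (n-k) * n.descFactorial k
      = n.factorial * (n.choose k)^2 := by
  rw [Nat.descFactorial_eq_factorial_mul_choose, Nat.descFactorial_eq_factorial_mul_choose,
    Nat.choose_symm hk]
  have h := Nat.choose_mul_factorial_mul_factorial hk
  rw [← h]
  ring

end Aux

/-- The `n`-th Legendre polynomial via Rodrigues' formula,
`P_n(x) = 1/(2^n n!) ⬝ dⁿ/dxⁿ (x²-1)ⁿ`, as a function on `ℂ`. -/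
noncomputable def legendre (n : ℕ) (x : ℂ) : ℂ :=
  (1 / ((2 : ℂ) ^ n * (n.factorial : ℂ))) *
    iteratedDeriv n (fun y : ℂ => (y ^ 2 - 1) ^ n) x

section Main
open Polynomial

lemma leg9_legendre_eq (n : ℕ) (x : ℂ) :
    legendre n x = ((2:ℂ)^n)⁻¹ *
      ∑ k ∈ range (n+1), (n.choose k : ℂ)^2 * (x-1)^k * (x+1)^(n-k) := by
  have hfun : (fun y : ℂ => (y^2-1)^n)
      = fun y => Polynomial.eval y (((X + C (-1:ℂ))^n) * ((X + C 1)^n)) := by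
    funext y
    rw [← mul_pow]
    simp only [eval_pow, eval_mul, eval_add, eval_X, eval_C]
    congr 1
    ring
  unfold legendre
  rw [hfun, leg9_polyIter, Polynomial.iterate_derivative_mul]
  simp only [Polynomial.iterate_derivative_X_add_pow, eval_finset_sum, smul_mul_assoc,
    mul_smul_comm, smul_smul, eval_smul, eval_mul, eval_natCast, eval_pow, eval_add, eval_X, eval_C, smul_eq_mul,
    nsmul_eq_mul]
  rw [Finset.mul_sum, Finset.mul_sum]
  refine sum_congr rfl fun k hk => ?_
  rw [mem_range, Nat.lt_succ_iff] at hk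
  have hc := congrArg (Nat.cast (R := ℂ)) (leg9_coefN hk)
  push_cast at hc
  have hfac : ((n.factorial : ℂ)) ≠ 0 := Nat.cast_ne_zero.2 (Nat.factorial_ne_zero n)
  have h2 : ((2:ℂ))^n ≠ 0 := pow_ne_zero n two_ne_zero
  rw [show n - (n-k) = k from by omega]
  field_simp
  linear_combination ((x-1)^k * (x+1)^(n-k)) * hc

lemma leg9_frac_combine (c P Q R S : ℂ) (k m : ℕ) (hR : R ≠ 0) (hS : S ≠ 0) :
    c * (P/R)^k * (Q/R)^m = (R^(k+m))⁻¹ * S^(k+m) * (c * (P/S)^k * (Q/S)^m) := by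
  rw [div_pow, div_pow, div_pow, div_pow, pow_add, pow_add]
  field_simp

end Main

theorem stmt_9 (n : ℕ) (t : ℂ) (ht : t ≠ 0) :
    legendre n ((t ^ 2 + 1) / (2 * t)) =
      (t ^ n)⁻¹ * ∑ k ∈ range (n + 1), (n.choose k : ℂ) *
        ((2 * k).choose k : ℂ) * ((t ^ 2 - 1) / 4) ^ k := by
  have h2t : (2*t : ℂ) ≠ 0 := mul_ne_zero two_ne_zero ht
  have h4 : (4:ℂ) ≠ 0 := by norm_num
  have e1 : ((t^2+1)/(2*t) - 1) = (t-1)^2/(2*t) := by field_simp; ring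
  have e2 : ((t^2+1)/(2*t) + 1) = (t+1)^2/(2*t) := by field_simp; ring
  have ex1 : (((t-1)/2)^2 : ℂ) = (t-1)^2/4 := by ring
  have ex2 : ((1+(t-1)/2)^2 : ℂ) = (t+1)^2/4 := by ring
  rw [leg9_legendre_eq, e1, e2]
  have sum1 : ∑ k ∈ range (n+1), (n.choose k : ℂ)^2 * ((t-1)^2/(2*t))^k * ((t+1)^2/(2*t))^(n-k)
      = (((2*t)^n)⁻¹ * (4:ℂ)^n) *
        ∑ k ∈ range (n+1), (n.choose k : ℂ)^2 * (((t-1)/2)^2)^k * ((1+(t-1)/2)^2)^(n-k) := by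
    rw [mul_sum]
    refine sum_congr rfl fun k hk => ?_
    rw [mem_range, Nat.lt_succ_iff] at hk
    rw [ex1, ex2]
    have hfc := leg9_frac_combine ((n.choose k : ℂ)^2) ((t-1)^2) ((t+1)^2) (2*t) 4 k (n-k) h2t h4
    rw [show k + (n-k) = n from by omega] at hfc
    rw [hfc]
  rw [sum1, leg9_key n ((t-1)/2),
    show ((t-1)/2 * (1+(t-1)/2) : ℂ) = (t^2-1)/4 from by ring]
  have hconst : ((2:ℂ)^n)⁻¹ * (((2*t)^n)⁻¹ * (4:ℂ)^n) = (t^n)⁻¹ := by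
    have h2 : ((2:ℂ))^n ≠ 0 := pow_ne_zero n two_ne_zero
    have htn : (t:ℂ)^n ≠ 0 := pow_ne_zero n ht
    rw [mul_pow, show (4:ℂ) = 2*2 from by norm_num, mul_pow]
    field_simp
  calc ((2:ℂ)^n)⁻¹ * ((((2*t)^n)⁻¹ * (4:ℂ)^n) *
        ∑ k ∈ range (n+1), (n.choose k : ℂ) * ((2*k).choose k : ℂ) * ((t^2-1)/4)^k)
      = (((2:ℂ)^n)⁻¹ * (((2*t)^n)⁻¹ * (4:ℂ)^n)) *
        ∑ k ∈ range (n+1), (n.choose k : ℂ) * ((2*k).choose k : ℂ) * ((t^2-1)/4)^k := by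
        ring
    _ = (t^n)⁻¹ * ∑ k ∈ range (n+1), (n.choose k : ℂ) * ((2*k).choose k : ℂ) * ((t^2-1)/4)^k := by
        rw [hconst]
end

section
/- Let n be a non-negative integer and let t be a nonzero complex number. Then ∑_{k=0}^{n} (−1)^k · C(n,k) · P_k((t²+1)/(2t)) · t^k = C(2n,n) · ((1−t²)/4)^n, where P_k is the k-th Legendre polynomial and C(a,b) denotes the ordinary binomial coefficient. -/
open Finset Polynomial Nat

lemma castChoose (a b : ℕ) :
    (((a+b).choose a : ℕ) : ℂ) = ((a+b).factorial : ℂ) / ((a.factorial : ℂ) * (b.factorial : ℂ)) := by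
  rw [Nat.cast_choose ℂ (Nat.le_add_right a b), Nat.add_sub_cancel_left]

lemma keyF (m r s : ℕ) :
    (((2*m+r+s).choose (m+r) : ℕ) : ℂ) * (((m+r).choose m : ℕ) : ℂ) * (((m+s).choose m : ℕ) : ℂ)
      = (((2*m+r+s).choose (2*m) : ℕ) : ℂ) * (((2*m).choose m : ℕ) : ℂ) * (((r+s).choose r : ℕ) : ℂ) := by
  have h1 := castChoose (m+r) (m+s)
  have h2 := castChoose m r
  have h3 := castChoose m s
  have h4 := castChoose (2*m) (r+s)
  have h5 := castChoose m m
  have h6 := castChoose r s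
  have e1 : m+r+(m+s) = 2*m+r+s := by ring
  have e2 : 2*m+(r+s) = 2*m+r+s := by ring
  have e3 : m + m = 2*m := by ring
  rw [e1] at h1; rw [e2] at h4; rw [e3] at h5
  rw [h1, h2, h3, h4, h5, h6]
  have hf : ∀ j : ℕ, ((j.factorial : ℕ) : ℂ) ≠ 0 :=
    fun j => Nat.cast_ne_zero.mpr (Nat.factorial_ne_zero j)
  field_simp [hf]

lemma vdm_s10 {j k : ℕ} (hjk : j ≤ k) :
    ∑ m ∈ range (k+1), (j.choose m) * ((k-j).choose m) = k.choose j := by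
  have h := Nat.add_choose_eq j (k-j) j
  rw [Nat.add_sub_cancel' hjk, Finset.Nat.sum_antidiagonal_eq_sum_range_succ_mk] at h
  calc ∑ m ∈ range (k+1), (j.choose m) * ((k-j).choose m)
      = ∑ m ∈ range (j+1), (j.choose m) * ((k-j).choose m) := by
        symm
        apply Finset.sum_subset
        · intro x hx; simp only [mem_range] at *; omega
        · intro x hx hx'
          simp only [mem_range] at hx hx'
          rw [Nat.choose_eq_zero_of_lt (by omega), zero_mul]
    _ = ∑ m ∈ range (j+1), (j.choose (j+1-1-m)) * ((k-j).choose (j - (j+1-1-m))) := by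
        apply Finset.sum_congr rfl
        intro m hm
        simp only [mem_range] at hm
        have hmj : m ≤ j := by omega
        have e1 : j+1-1-m = j-m := by omega
        have e2 : j-(j-m) = m := by omega
        rw [e1, e2, Nat.choose_symm hmj]
    _ = ∑ a ∈ range (j+1), (j.choose a) * ((k-j).choose (j-a)) :=
        Finset.sum_range_reflect (fun a => (j.choose a) * ((k-j).choose (j-a))) (j+1)
    _ = k.choose j := h.symm

lemma L3inner (k m : ℕ) (X Y : ℂ) :
    ∑ j ∈ range (k+1), ((k.choose j * (j.choose m) * ((k-j).choose m) : ℕ) : ℂ) * (X^(k-j) * Y^j)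
      = ((k.choose (2*m) * ((2*m).choose m) : ℕ) : ℂ) * (X*Y)^m * (X+Y)^(k-2*m) := by
  by_cases h2m : 2*m ≤ k
  · rw [add_pow]
    rw [← Finset.sum_range_reflect
      (fun r => X ^ r * Y ^ (k - 2*m - r) * ((k - 2*m).choose r : ℂ)) (k - 2*m + 1)]
    rw [Finset.mul_sum]
    calc ∑ j ∈ range (k+1), ((k.choose j * (j.choose m) * ((k-j).choose m) : ℕ) : ℂ) * (X^(k-j) * Y^j)
        = ∑ j ∈ Ico m (k-m+1),
            ((k.choose j * (j.choose m) * ((k-j).choose m) : ℕ) : ℂ) * (X^(k-j) * Y^j) := by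
          symm
          apply Finset.sum_subset
          · intro x hx
            simp only [mem_Ico, mem_range] at *
            omega
          · intro x hx hx'
            simp only [mem_range, mem_Ico] at hx hx'
            have : x.choose m * ((k-x).choose m) = 0 := by
              rcases (by omega : x < m ∨ k - x < m) with h | h
              · rw [Nat.choose_eq_zero_of_lt h, zero_mul]
              · rw [Nat.choose_eq_zero_of_lt h, mul_zero]
            rw [mul_assoc, this, mul_zero, Nat.cast_zero, zero_mul]
      _ = ∑ r ∈ range (k-m+1-m),
            ((k.choose (m+r) * ((m+r).choose m) * ((k-(m+r)).choose m) : ℕ) : ℂ)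
              * (X^(k-(m+r)) * Y^(m+r)) :=
          Finset.sum_Ico_eq_sum_range
            (fun j => ((k.choose j * (j.choose m) * ((k-j).choose m) : ℕ) : ℂ) * (X^(k-j) * Y^j))
            m (k-m+1)
      _ = ∑ r ∈ range (k-2*m+1),
            ((k.choose (2*m) * ((2*m).choose m) : ℕ) : ℂ) * (X*Y)^m
              * (X ^ (k-2*m+1-1-r) * Y ^ (k-2*m - (k-2*m+1-1-r)) * ((k-2*m).choose (k-2*m+1-1-r) : ℂ)) := by
          rw [show k-m+1-m = k-2*m+1 from by omega]
          apply Finset.sum_congr rfl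
          intro r hr
          simp only [mem_range] at hr
          obtain ⟨s, rfl⟩ : ∃ s, k = 2*m+r+s := ⟨k - 2*m - r, by omega⟩
          have e1 : 2*m+r+s - (m+r) = m+s := by omega
          have e2 : 2*m+r+s - 2*m = r+s := by omega
          have e3 : r+s+1-1-r = s := by omega
          have e4 : r+s - s = r := by omega
          have e5 := Nat.choose_symm (Nat.le_add_right r s)
          rw [Nat.add_sub_cancel_left] at e5
          rw [e1, e2, e3, e4, e5]
          push_cast
          linear_combination (X^m * X^s * Y^m * Y^r) * keyF m r s
      _ = _ := rfl
  · have hz : ∀ j ∈ range (k+1), ((k.choose j * (j.choose m) * ((k-j).choose m) : ℕ) : ℂ) * (X^(k-j) * Y^j) = 0 := by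
      intro j hj
      simp only [mem_range] at hj
      have : j.choose m * ((k-j).choose m) = 0 := by
        rcases (by omega : j < m ∨ k - j < m) with h | h
        · rw [Nat.choose_eq_zero_of_lt h, zero_mul]
        · rw [Nat.choose_eq_zero_of_lt h, mul_zero]
      rw [mul_assoc, this, mul_zero, Nat.cast_zero, zero_mul]
    rw [Finset.sum_eq_zero hz, Nat.choose_eq_zero_of_lt (by omega), zero_mul, Nat.cast_zero,
      zero_mul, zero_mul]

lemma keyChain (p i d : ℕ) :
    (((p+i+d).choose (p+i) : ℕ) : ℂ) * (((p+i).choose p : ℕ) : ℂ)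
      = (((p+i+d).choose p : ℕ) : ℂ) * (((i+d).choose i : ℕ) : ℂ) := by
  have h1 := castChoose (p+i) d
  have h2 := castChoose p i
  have h3 := castChoose p (i+d)
  have h4 := castChoose i d
  have e3 : p+(i+d) = p+i+d := by ring
  rw [e3] at h3
  rw [h1, h2, h3, h4]
  have hf : ∀ j : ℕ, ((j.factorial : ℕ) : ℂ) ≠ 0 :=
    fun j => Nat.cast_ne_zero.mpr (Nat.factorial_ne_zero j)
  field_simp [hf]


lemma L3 (k : ℕ) (X Y : ℂ) :
    ∑ j ∈ range (k+1), ((k.choose j : ℕ) : ℂ)^2 * (X^(k-j) * Y^j)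
      = ∑ m ∈ range (k+1), ((k.choose (2*m) * ((2*m).choose m) : ℕ) : ℂ) * (X*Y)^m * (X+Y)^(k-2*m) := by
  have step1 : ∀ j ∈ range (k+1), ((k.choose j : ℕ):ℂ)^2 * (X^(k-j)*Y^j)
      = ∑ m ∈ range (k+1), ((k.choose j * (j.choose m) * ((k-j).choose m) : ℕ):ℂ) * (X^(k-j)*Y^j) := by
    intro j hj
    simp only [mem_range] at hj
    have hv := vdm_s10 (show j ≤ k by omega)
    have hnat : k.choose j * k.choose j
        = ∑ m ∈ range (k+1), k.choose j * (j.choose m) * ((k-j).choose m) := by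
      rw [← hv, Finset.mul_sum]
      exact Finset.sum_congr rfl fun m _ => (mul_assoc _ _ _).symm
    calc ((k.choose j : ℕ):ℂ)^2 * (X^(k-j)*Y^j)
        = ((k.choose j * k.choose j : ℕ) : ℂ) * (X^(k-j)*Y^j) := by push_cast; ring
      _ = ((∑ m ∈ range (k+1), k.choose j * (j.choose m) * ((k-j).choose m) : ℕ) : ℂ)
            * (X^(k-j)*Y^j) := by rw [hnat]
      _ = _ := by rw [Nat.cast_sum, Finset.sum_mul]
  rw [Finset.sum_congr rfl step1, Finset.sum_comm]
  exact Finset.sum_congr rfl fun m _ => L3inner k m X Y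

lemma sumsq (n : ℕ) : ∑ j ∈ range (n+1), ((n.choose j)*(n.choose j)) = (2*n).choose n := by
  have h := vdm_s10 (show n ≤ 2*n by omega)
  rw [show 2*n - n = n from by omega] at h
  rw [← h]
  apply Finset.sum_subset
  · intro x hx; simp only [mem_range] at *; omega
  · intro x hx hx'
    simp only [mem_range] at hx hx'
    rw [Nat.choose_eq_zero_of_lt (by omega), zero_mul]

lemma W (n : ℕ) : ∑ m ∈ range (n+1), ((n.choose (2*m) * ((2*m).choose m) : ℕ) : ℂ) * 2^(n-2*m)
    = (((2*n).choose n : ℕ) : ℂ) := by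
  have h := L3 n 1 1
  simp only [mul_one, one_pow, one_mul] at h
  rw [show ((1:ℂ)+1) = 2 from by norm_num] at h
  rw [← h]
  rw [← sumsq n]
  push_cast
  exact Finset.sum_congr rfl fun j _ => by ring

lemma iteratedDeriv_polyeval (p : Polynomial ℂ) (n : ℕ) :
    iteratedDeriv n (fun y : ℂ => p.eval y) = fun x => (derivative^[n] p).eval x := by
  induction n with
  | zero => simp
  | succ n ih =>
    rw [iteratedDeriv_succ, ih]
    funext x
    rw [Function.iterate_succ_apply', Polynomial.deriv]

lemma legendre_eq (k : ℕ) (x : ℂ) :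
    legendre k x = (1/2^k : ℂ) *
      ∑ i ∈ range (k+1), ((k.choose i : ℕ) : ℂ)^2 * ((x+1)^(k-i) * (x-1)^i) := by
  have hp : (fun y : ℂ => (y^2-1)^k)
      = fun y => Polynomial.eval y (((X - C 1)^k * (X - C (-1))^k : ℂ[X])) := by
    funext y
    simp only [eval_mul, eval_pow, eval_sub, eval_X, eval_C]
    rw [← mul_pow]
    congr 1
    ring
  rw [legendre, hp, iteratedDeriv_polyeval, Polynomial.iterate_derivative_mul]
  beta_reduce
  rw [Polynomial.eval_finset_sum]
  rw [Finset.mul_sum, Finset.mul_sum]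
  apply Finset.sum_congr rfl
  intro i hi
  simp only [mem_range] at hi
  have hik : i ≤ k := by omega
  rw [Polynomial.iterate_derivative_X_sub_pow, Polynomial.iterate_derivative_X_sub_pow]
  rw [show k - (k - i) = i from by omega]
  have hnat : k.choose i * (k.descFactorial (k-i) * k.descFactorial i)
      = k.factorial * (k.choose i * k.choose i) := by
    rw [Nat.descFactorial_eq_factorial_mul_choose, Nat.descFactorial_eq_factorial_mul_choose,
      Nat.choose_symm hik]
    calc k.choose i * ((k-i).factorial * k.choose i * (i.factorial * k.choose i))
        = (k.choose i * i.factorial * (k-i).factorial) * (k.choose i * k.choose i) := by ring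
      _ = k.factorial * (k.choose i * k.choose i) := by
          rw [Nat.choose_mul_factorial_mul_factorial hik]
  have hfz : (k.factorial : ℂ) ≠ 0 := Nat.cast_ne_zero.mpr (Nat.factorial_ne_zero k)
  have h2z : ((2:ℂ)^k) ≠ 0 := pow_ne_zero _ two_ne_zero
  simp only [smul_mul_assoc, mul_smul_comm, Polynomial.eval_smul, smul_smul]
  simp only [eval_mul, eval_pow, eval_sub, eval_X, eval_C, nsmul_eq_mul]
  push_cast
  have : ((k.choose i : ℂ) * ((k.descFactorial (k-i) : ℂ) * (k.descFactorial i : ℂ)))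
      = (k.factorial : ℂ) * ((k.choose i : ℂ) * (k.choose i : ℂ)) := by
    exact_mod_cast congrArg (Nat.cast : ℕ → ℂ) hnat
  field_simp
  linear_combination ((x-1)^i * (x+1)^(k-i)) * this

theorem stmt_10 (n : ℕ) (t : ℂ) (ht : t ≠ 0) :
    ∑ k ∈ range (n + 1), (-1 : ℂ) ^ k * (n.choose k : ℂ) *
        legendre k ((t ^ 2 + 1) / (2 * t)) * t ^ k =
      ((2 * n).choose n : ℂ) * ((1 - t ^ 2) / 4) ^ n := by
  set x : ℂ := (t ^ 2 + 1) / (2 * t) with hxdef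
  set w : ℂ := t ^ 2 - 1 with hwdef
  set X : ℂ := (t + 1) ^ 2 / 4 with hXdef
  set Y : ℂ := (t - 1) ^ 2 / 4 with hYdef
  have hX : (x + 1) * (t / 2) = X := by
    rw [hxdef, hXdef]; field_simp; ring
  have hY : (x - 1) * (t / 2) = Y := by
    rw [hxdef, hYdef]; field_simp; ring
  have hXY : X * Y = ((w/4)^2) := by rw [hXdef, hYdef, hwdef]; ring
  have hXpY : X + Y = (w + 2)/2 := by rw [hXdef, hYdef, hwdef]; ring
  have hleg : ∀ k : ℕ, legendre k x * t ^ k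
      = ∑ m ∈ range (k+1), ((k.choose (2*m) * ((2*m).choose m) : ℕ) : ℂ)
          * ((w/4)^2)^m * ((w+2)/2)^(k-2*m) := by
    intro k
    have := L3 k X Y
    rw [hXY, hXpY] at this
    rw [← this, legendre_eq]
    rw [mul_comm ((1:ℂ)/2^k) _, mul_assoc, Finset.sum_mul]
    apply Finset.sum_congr rfl
    intro i hi
    simp only [mem_range] at hi
    have hsplit : (1/2^k : ℂ) * t^k = (t/2)^(k-i) * (t/2)^i := by
      rw [← pow_add, show k - i + i = k from by omega, div_pow]
      ring
    rw [mul_assoc, hsplit, ← hX, ← hY]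
    rw [mul_pow, mul_pow]
    ring
  have hstep1 : ∑ k ∈ range (n + 1), (-1 : ℂ) ^ k * (n.choose k : ℂ) * legendre k x * t ^ k
      = ∑ k ∈ range (n+1), ∑ m ∈ range (n+1),
          (-1:ℂ)^k * (n.choose k : ℂ) * (((k.choose (2*m) * ((2*m).choose m) : ℕ) : ℂ)
            * ((w/4)^2)^m * ((w+2)/2)^(k-2*m)) := by
    apply Finset.sum_congr rfl
    intro k hk
    simp only [mem_range] at hk
    rw [mul_assoc, hleg k, Finset.mul_sum]
    apply Finset.sum_subset
    · intro m hm; simp only [mem_range] at *; omega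
    · intro m hm hm'
      simp only [mem_range] at hm hm'
      rw [Nat.choose_eq_zero_of_lt (show k < 2*m by omega), zero_mul, Nat.cast_zero,
        zero_mul, zero_mul, mul_zero]
  rw [hstep1, Finset.sum_comm]
  have hinner : ∀ m ∈ range (n+1),
      ∑ k ∈ range (n+1), (-1:ℂ)^k * (n.choose k : ℂ) * (((k.choose (2*m) * ((2*m).choose m) : ℕ) : ℂ)
          * ((w/4)^2)^m * ((w+2)/2)^(k-2*m))
        = ((n.choose (2*m) * ((2*m).choose m) : ℕ) : ℂ) * ((w/4)^2)^m * (-w/2)^(n-2*m) := by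
    intro m hm
    simp only [mem_range] at hm
    by_cases h2m : 2*m ≤ n
    · calc ∑ k ∈ range (n+1), (-1:ℂ)^k * (n.choose k : ℂ) * (((k.choose (2*m) * ((2*m).choose m) : ℕ) : ℂ)
            * ((w/4)^2)^m * ((w+2)/2)^(k-2*m))
          = ∑ k ∈ Ico (2*m) (n+1), (-1:ℂ)^k * (n.choose k : ℂ) * (((k.choose (2*m) * ((2*m).choose m) : ℕ) : ℂ)
            * ((w/4)^2)^m * ((w+2)/2)^(k-2*m)) := by
            symm
            apply Finset.sum_subset
            · intro a ha; simp only [mem_Ico, mem_range] at *; omega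
            · intro a ha ha'
              simp only [mem_range, mem_Ico] at ha ha'
              rw [Nat.choose_eq_zero_of_lt (show a < 2*m by omega), zero_mul, Nat.cast_zero,
                zero_mul, zero_mul, mul_zero]
        _ = ∑ i ∈ range (n+1-2*m), (-1:ℂ)^(2*m+i) * (n.choose (2*m+i) : ℂ)
              * ((((2*m+i).choose (2*m) * ((2*m).choose m) : ℕ) : ℂ)
                * ((w/4)^2)^m * ((w+2)/2)^(2*m+i-2*m)) :=
            Finset.sum_Ico_eq_sum_range
              (fun k => (-1:ℂ)^k * (n.choose k : ℂ) * (((k.choose (2*m) * ((2*m).choose m) : ℕ) : ℂ)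
                * ((w/4)^2)^m * ((w+2)/2)^(k-2*m))) (2*m) (n+1)
        _ = ((n.choose (2*m) * ((2*m).choose m) : ℕ) : ℂ) * ((w/4)^2)^m
              * ∑ i ∈ range ((n-2*m)+1), (-((w+2)/2))^i * 1^(n-2*m-i) * ((n-2*m).choose i : ℂ) := by
            rw [show n+1-2*m = (n-2*m)+1 from by omega, Finset.mul_sum]
            apply Finset.sum_congr rfl
            intro i hi
            simp only [mem_range] at hi
            have hchain := keyChain (2*m) i (n - 2*m - i)
            rw [show 2*m+i+(n-2*m-i) = n from by omega, show i+(n-2*m-i) = n-2*m from by omega]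
              at hchain
            have e1 : 2*m+i-2*m = i := by omega
            have em1 : ((-1:ℂ))^(2*m+i) = (-1)^i := by
              rw [pow_add, pow_mul, neg_one_sq, one_pow, one_mul]
            rw [e1, em1]
            push_cast at hchain ⊢
            rw [show ((-((w+2)/2) : ℂ))^i = (-1)^i * ((w+2)/2)^i from by
              rw [← neg_one_mul, mul_pow], one_pow]
            linear_combination (((2*m).choose m : ℂ) * ((w/4)^2)^m * ((-1:ℂ)^i * ((w+2)/2)^i)) * hchain
        _ = ((n.choose (2*m) * ((2*m).choose m) : ℕ) : ℂ) * ((w/4)^2)^m * (-w/2)^(n-2*m) := by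
            rw [← add_pow, show (-((w+2)/2) + 1 : ℂ) = -w/2 from by ring]
    · rw [Nat.choose_eq_zero_of_lt (show n < 2*m by omega)]
      push_cast
      rw [Finset.sum_eq_zero]
      · ring
      · intro k hk
        simp only [mem_range] at hk
        rw [Nat.choose_eq_zero_of_lt (show k < 2*m by omega)]
        push_cast
        ring
  rw [Finset.sum_congr rfl hinner]
  have hfinal : ∀ m ∈ range (n+1),
      ((n.choose (2*m) * ((2*m).choose m) : ℕ) : ℂ) * ((w/4)^2)^m * (-w/2)^(n-2*m)
        = (((n.choose (2*m) * ((2*m).choose m) : ℕ) : ℂ) * 2^(n-2*m)) * ((-1)^n * w^n / 4^n) := by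
    intro m hm
    simp only [mem_range] at hm
    by_cases h2m : 2*m ≤ n
    · obtain ⟨e, rfl⟩ : ∃ e, n = 2*m + e := ⟨n - 2*m, by omega⟩
      rw [show 2*m+e-2*m = e from by omega]
      have em1 : ((-1:ℂ))^(2*m+e) = (-1)^e := by
        rw [pow_add, pow_mul, neg_one_sq, one_pow, one_mul]
      have key : (-w/2 : ℂ)^e = (-1)^e * (w/4)^e * 2^e := by
        rw [show (-w/2 : ℂ) = (-1) * (w/4) * 2 from by ring, mul_pow, mul_pow]
      have key2 : ((-1:ℂ)^e * w^(2*m+e) / 4^(2*m+e)) = (-1)^e * ((w/4)^(2*m) * (w/4)^e) := by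
        rw [← pow_add, div_pow]
        ring
      rw [← pow_mul, em1, key, key2]
      ring
    · rw [Nat.choose_eq_zero_of_lt (show n < 2*m by omega)]
      push_cast
      ring
  rw [Finset.sum_congr rfl hfinal, ← Finset.sum_mul]
  rw [W n]
  rw [show ((1 - t^2)/4 : ℂ)^n = (-1)^n * w^n / 4^n from by
    rw [div_pow, show (1 - t^2 : ℂ) = -w from by rw [hwdef]; ring, neg_pow]]
end

section
/- For every non-negative integer n, H_n² = (1/4) · ∑_{k=0}^{n} (−1)^{n+k} · C(n,k) · C(n+k, k) · (H_k² + H_k^{(2)}), where C(a,b) denotes the ordinary binomial coefficient. -/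
open Finset

/-- The `n`-th generalized harmonic number of order 2, `H_n^{(2)} = ∑_{j=1}^n 1/j²`. -/
noncomputable def H2 (n : ℕ) : ℝ :=
  ∑ j ∈ Finset.range n, 1 / ((j : ℝ) + 1) ^ 2

lemma alt_real (M : ℕ) :
    ∑ t ∈ range (M+1), (-1:ℝ)^t * (M.choose t : ℝ) = if M = 0 then 1 else 0 := by
  have h := @Int.alternating_sum_range_choose M
  by_cases hM : M = 0
  · subst hM; simp
  · rw [if_neg hM] at h ⊢
    exact_mod_cast h

lemma alt2 (N j : ℕ) :
    ∑ i ∈ range (N+1), (-1:ℝ)^i * (N.choose i : ℝ) * (i.choose j : ℝ)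
      = if j = N then (-1:ℝ)^N else 0 := by
  by_cases h : j ≤ N
  swap
  · rw [if_neg (by omega)]
    apply Finset.sum_eq_zero
    intro i hi; simp only [mem_range] at hi
    rw [(Nat.choose_eq_zero_of_lt (show i < j by omega) : i.choose j = 0)]; ring
  have hsub : Ico j (N+1) ⊆ range (N+1) := by
    intro x hx; simp at hx ⊢; omega
  rw [← Finset.sum_subset hsub (by
    intro x hx hnx
    simp only [mem_range, mem_Ico, not_and, not_le] at hx hnx
    have : x < j := by omega
    rw [Nat.choose_eq_zero_of_lt this]; ring)]
  rw [Finset.sum_Ico_eq_sum_range]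
  have hNj : N + 1 - j = (N - j) + 1 := by omega
  rw [hNj]
  have : ∀ t ∈ range ((N-j)+1), (-1:ℝ)^(j+t) * (N.choose (j+t) : ℝ) * ((j+t).choose j : ℝ)
      = ((-1:ℝ)^j * (N.choose j : ℝ)) * ((-1:ℝ)^t * ((N-j).choose t : ℝ)) := by
    intro t ht
    simp only [mem_range] at ht
    have h1 : j + t ≤ N := by omega
    have h2 : j ≤ j + t := by omega
    have := Nat.choose_mul (n := N) h2
    have h3 : j + t - j = t := by omega
    rw [h3] at this
    have h4 : ((N.choose (j+t)) : ℝ) * ((j+t).choose j : ℝ) = ((N.choose j):ℝ) * ((N-j).choose t : ℝ) := by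
      exact_mod_cast congrArg (Nat.cast : ℕ → ℝ) this
    rw [pow_add]
    linear_combination ((-1:ℝ)^j*(-1:ℝ)^t) * h4
  rw [Finset.sum_congr rfl this, ← Finset.mul_sum, alt_real]
  by_cases hjN : j = N
  · subst hjN; simp
  · have : N - j ≠ 0 := by omega
    rw [if_neg this, if_neg hjN, mul_zero]

lemma star (n m : ℕ) :
    ∑ k ∈ range (n+1), (-1:ℝ)^(n+k) * (n.choose k : ℝ) * ((n+k).choose k : ℝ) * (k.choose m : ℝ)
      = (n.choose m : ℝ) * ((n+m).choose m : ℝ) := by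
  by_cases hm : m ≤ n
  swap
  · rw [Nat.choose_eq_zero_of_lt (by omega : n < m)]
    push_cast
    rw [zero_mul]
    apply Finset.sum_eq_zero
    intro k hk; simp only [mem_range] at hk
    rw [(Nat.choose_eq_zero_of_lt (show k < m by omega) : k.choose m = 0)]
    push_cast; ring
  have hsub : Ico m (n+1) ⊆ range (n+1) := by intro x hx; simp at hx ⊢; omega
  rw [← Finset.sum_subset hsub (by
    intro x hx hnx
    simp only [mem_range, mem_Ico, not_and, not_le] at hx hnx
    rw [(Nat.choose_eq_zero_of_lt (show x < m by omega) : x.choose m = 0)]; ring)]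
  rw [Finset.sum_Ico_eq_sum_range]
  have hNm : n + 1 - m = (n - m) + 1 := by omega
  rw [hNm]
  have key : ∀ i ∈ range ((n-m)+1),
      (-1:ℝ)^(n+(m+i)) * (n.choose (m+i) : ℝ) * ((n+(m+i)).choose (m+i) : ℝ) * ((m+i).choose m : ℝ)
      = ∑ j ∈ range (n+1), ((-1:ℝ)^(n+m) * (n.choose m : ℝ) * ((n+m).choose j : ℝ))
          * ((-1:ℝ)^i * ((n-m).choose i : ℝ) * (i.choose (n-j) : ℝ)) := by
    intro i hi
    simp only [mem_range] at hi
    -- C(n, m+i) * C(m+i, m) = C(n,m) * C(n-m, i)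
    have e1 : (n.choose (m+i) : ℝ) * ((m+i).choose m : ℝ) = (n.choose m : ℝ) * ((n-m).choose i : ℝ) := by
      have := Nat.choose_mul (n := n) (show m ≤ m + i by omega)
      have h3 : m + i - m = i := by omega
      rw [h3] at this
      exact_mod_cast congrArg (Nat.cast : ℕ → ℝ) this
    -- C(n+(m+i), m+i) = C((n+m)+i, n)
    have e2 : (n+(m+i)).choose (m+i) = ((n+m)+i).choose n := by
      rw [show n+(m+i) = n+m+i by omega]
      exact Nat.choose_symm_of_eq_add (by omega)
    -- Vandermonde
    have e3 : (((n+m)+i).choose n : ℝ) = ∑ j ∈ range (n+1), ((n+m).choose j : ℝ) * (i.choose (n-j) : ℝ) := by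
      have := Nat.add_choose_eq (n+m) i n
      rw [Finset.Nat.sum_antidiagonal_eq_sum_range_succ_mk] at this
      exact_mod_cast congrArg (Nat.cast : ℕ → ℝ) this
    have p : (-1:ℝ)^(n+(m+i)) = (-1:ℝ)^(n+m) * (-1:ℝ)^i := by
      rw [show n+(m+i) = (n+m)+i by omega, pow_add]
    rw [e2, e3, p, Finset.mul_sum, Finset.sum_mul]
    apply Finset.sum_congr rfl
    intro j hj
    linear_combination ((-1:ℝ)^(n+m) * (-1:ℝ)^i * ((n+m).choose j : ℝ) * (i.choose (n-j):ℝ)) * e1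
  rw [Finset.sum_congr rfl key, Finset.sum_comm]
  have inner : ∀ j ∈ range (n+1),
      ∑ i ∈ range ((n-m)+1), ((-1:ℝ)^(n+m) * (n.choose m : ℝ) * ((n+m).choose j : ℝ))
          * ((-1:ℝ)^i * ((n-m).choose i : ℝ) * (i.choose (n-j) : ℝ))
      = ((-1:ℝ)^(n+m) * (n.choose m : ℝ) * ((n+m).choose j : ℝ))
          * (if n - j = n - m then (-1:ℝ)^(n-m) else 0) := by
    intro j hj
    rw [← Finset.mul_sum, alt2]
  rw [Finset.sum_congr rfl inner]
  rw [Finset.sum_eq_single m]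
  · rw [if_pos rfl]
    rw [show (-1:ℝ)^(n+m) * (n.choose m : ℝ) * ((n+m).choose m : ℝ) * (-1:ℝ)^(n-m)
        = ((-1:ℝ)^(n+m) * (-1:ℝ)^(n-m)) * ((n.choose m : ℝ) * ((n+m).choose m : ℝ)) by ring]
    rw [← pow_add, show n+m+(n-m) = 2*n by omega]
    simp [pow_mul]
  · intro j hj hne
    simp only [mem_range] at hj
    rw [if_neg (by omega), mul_zero]
  · intro habs
    exact absurd (by simp; omega : m ∈ range (n+1)) habs

lemma G (n : ℕ) : ∑ m ∈ range (n+2), (-1:ℝ)^m * ((n+1).choose m : ℝ) * (((n+m).choose n) : ℝ) = 0 := by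
  have key : ∀ m ∈ range (n+2), (-1:ℝ)^m * ((n+1).choose m:ℝ) * (((n+m).choose n):ℝ)
      = ∑ j ∈ range (n+1), (n.choose j : ℝ) * ((-1:ℝ)^m * ((n+1).choose m:ℝ) * (m.choose (n-j):ℝ)) := by
    intro m hm
    have e3 : (((n+m)).choose n : ℝ) = ∑ j ∈ range (n+1), (n.choose j : ℝ) * (m.choose (n-j) : ℝ) := by
      have h := Nat.add_choose_eq n m n
      rw [Finset.Nat.sum_antidiagonal_eq_sum_range_succ_mk] at h
      exact_mod_cast congrArg (Nat.cast : ℕ → ℝ) h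
    rw [e3, Finset.mul_sum]
    apply Finset.sum_congr rfl; intro j hj; ring
  rw [Finset.sum_congr rfl key, Finset.sum_comm]
  apply Finset.sum_eq_zero
  intro j hj
  simp only [mem_range] at hj
  rw [← Finset.mul_sum, alt2 (n+1) (n-j), if_neg (by omega), mul_zero]

lemma FSlem (n : ℕ) : ∑ j ∈ range n, (-1:ℝ)^j * (((n+1).choose (j+1)) : ℝ) * (((n+j+1).choose (j+1)) : ℝ)
    = 1 - (-1:ℝ)^n * (((2*n+1).choose n) : ℝ) := by
  have h0 := G n
  rw [Finset.sum_range_succ'] at h0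
  simp only [Nat.choose_zero_right, Nat.cast_one, pow_zero, one_mul, Nat.add_zero,
    Nat.choose_self, mul_one] at h0
  have e1 : ∀ j ∈ range (n+1), (-1:ℝ)^(j+1) * (((n+1).choose (j+1)):ℝ) * (((n+(j+1)).choose n):ℝ)
      = -((-1:ℝ)^j * (((n+1).choose (j+1)):ℝ) * (((n+j+1).choose (j+1)):ℝ)) := by
    intro j hj
    have e2 : (n+(j+1)).choose n = (n+j+1).choose (j+1) := by
      rw [show n+(j+1) = n+j+1 by omega]
      exact Nat.choose_symm_of_eq_add (by omega)
    rw [e2, pow_succ]; ring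
  rw [Finset.sum_congr rfl e1, Finset.sum_neg_distrib, Finset.sum_range_succ] at h0
  simp only [Nat.choose_self, Nat.cast_one, mul_one] at h0
  have e3 : (n+n+1).choose (n+1) = (2*n+1).choose n := by
    rw [show n+n+1 = 2*n+1 by omega]
    exact Nat.choose_symm_half n
  rw [e3] at h0
  linarith

lemma c2 (n : ℕ) : ((2*n+2).choose (n+1)) = 2 * ((2*n+1).choose n) := by
  have h1 : (2*n+2).choose (n+1) = (2*n+1).choose n + (2*n+1).choose (n+1) :=
    Nat.choose_succ_succ (2*n+1) n
  rw [h1, Nat.choose_symm_half n]; omega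

lemma Hsucc (k : ℕ) : H (k+1) = H k + 1/((k:ℝ)+1) := Finset.sum_range_succ _ _

lemma H2succ (k : ℕ) : H2 (k+1) = H2 k + 1/(((k:ℝ)+1))^2 := Finset.sum_range_succ _ _

lemma E0 (N : ℕ) : ∑ j ∈ range (N+1), (-1:ℝ)^j * (N.choose j : ℝ) / ((j:ℝ)+1)
    = 1/((N:ℝ)+1) := by
  have key : ∀ j ∈ range (N+1), (-1:ℝ)^j * (N.choose j : ℝ) / ((j:ℝ)+1)
      = (1/((N:ℝ)+1)) * ((-1:ℝ)^j * (((N+1).choose (j+1)) : ℝ)) := by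
    intro j hj
    have h := Nat.add_one_mul_choose_eq N j
    have hc : ((N:ℝ)+1) * (N.choose j : ℝ) = (((N+1).choose (j+1)) : ℝ) * ((j:ℝ)+1) := by
      exact_mod_cast congrArg (Nat.cast : ℕ → ℝ) h
    have hj1 : ((j:ℝ)+1) ≠ 0 := by positivity
    have hN1 : ((N:ℝ)+1) ≠ 0 := by positivity
    field_simp
    linear_combination hc
  rw [Finset.sum_congr rfl key, ← Finset.mul_sum]
  have hS : ∑ j ∈ range (N+1), ((-1:ℝ)^j * (((N+1).choose (j+1)) : ℝ)) = 1 := by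
    have h0 := alt_real (N+1)
    rw [if_neg (Nat.succ_ne_zero N), Finset.sum_range_succ'] at h0
    simp only [Nat.choose_zero_right, Nat.cast_one, pow_zero, one_mul] at h0
    have : ∑ j ∈ range (N+1), (-1:ℝ)^(j+1) * (((N+1).choose (j+1)) : ℝ)
        = - ∑ j ∈ range (N+1), (-1:ℝ)^j * (((N+1).choose (j+1)) : ℝ) := by
      rw [← Finset.sum_neg_distrib]
      apply Finset.sum_congr rfl
      intro j hj; rw [pow_succ]; ring
    rw [this] at h0
    linarith
  rw [hS, mul_one]

lemma E (N : ℕ) : ∑ j ∈ range N, (-1:ℝ)^j * ((N.choose (j+1)):ℝ) / ((j:ℝ)+1) = H N := by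
  induction N with
  | zero => simp [H]
  | succ N ih =>
    have split : ∀ j ∈ range (N+1), (-1:ℝ)^j * (((N+1).choose (j+1)):ℝ) / ((j:ℝ)+1)
        = (-1:ℝ)^j * ((N.choose j):ℝ) / ((j:ℝ)+1) + (-1:ℝ)^j * ((N.choose (j+1)):ℝ) / ((j:ℝ)+1) := by
      intro j hj
      have hp : (((N+1).choose (j+1)) : ℝ) = ((N.choose j):ℝ) + ((N.choose (j+1)):ℝ) := by
        exact_mod_cast congrArg (Nat.cast : ℕ → ℝ) (Nat.choose_succ_succ N j)
      rw [hp]; ring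
    rw [Finset.sum_congr rfl split, Finset.sum_add_distrib, E0 N, Finset.sum_range_succ,
      Nat.choose_succ_self, ih, Hsucc]
    push_cast
    ring

lemma E2 (k : ℕ) : ∑ j ∈ range (k+1), (-1:ℝ)^j * (k.choose j : ℝ) / ((j:ℝ)+1)^2
    = H (k+1) / ((k:ℝ)+1) := by
  have key : ∀ j ∈ range (k+1), (-1:ℝ)^j * (k.choose j : ℝ) / ((j:ℝ)+1)^2
      = (1/((k:ℝ)+1)) * ((-1:ℝ)^j * (((k+1).choose (j+1)):ℝ) / ((j:ℝ)+1)) := by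
    intro j hj
    have h := Nat.add_one_mul_choose_eq k j
    have hc : ((k:ℝ)+1) * (k.choose j : ℝ) = (((k+1).choose (j+1)) : ℝ) * ((j:ℝ)+1) := by
      exact_mod_cast congrArg (Nat.cast : ℕ → ℝ) h
    have hj1 : ((j:ℝ)+1) ≠ 0 := by positivity
    have hk1 : ((k:ℝ)+1) ≠ 0 := by positivity
    field_simp
    linear_combination hc
  rw [Finset.sum_congr rfl key, ← Finset.mul_sum, E (k+1)]
  ring

lemma R (k : ℕ) : H k ^ 2 + H2 k
    = 2 * ∑ j ∈ range k, (-1:ℝ)^j * ((k.choose (j+1)) : ℝ) / ((j:ℝ)+1)^2 := by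
  induction k with
  | zero => simp [H, H2]
  | succ k ih =>
    have split : ∀ j ∈ range (k+1), (-1:ℝ)^j * (((k+1).choose (j+1)):ℝ) / ((j:ℝ)+1)^2
        = (-1:ℝ)^j * ((k.choose j):ℝ) / ((j:ℝ)+1)^2 + (-1:ℝ)^j * ((k.choose (j+1)):ℝ) / ((j:ℝ)+1)^2 := by
      intro j hj
      have hp : (((k+1).choose (j+1)) : ℝ) = ((k.choose j):ℝ) + ((k.choose (j+1)):ℝ) := by
        exact_mod_cast congrArg (Nat.cast : ℕ → ℝ) (Nat.choose_succ_succ k j)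
      rw [hp]; ring
    rw [Finset.sum_congr rfl split, Finset.sum_add_distrib, E2 k, Finset.sum_range_succ,
      Nat.choose_succ_self, Hsucc, H2succ]
    push_cast
    have hrw : ((1:ℝ)+(k:ℝ)*2+(k:ℝ)^2)⁻¹ = ((1+(k:ℝ))⁻¹)^2 := by
      rw [show ((1:ℝ)+(k:ℝ)*2+(k:ℝ)^2) = (1+(k:ℝ))^2 by ring, ← inv_pow]
    linear_combination ih + hrw

lemma perterm_key (n j : ℕ) (hj : j < n) :
    (((n+1).choose (j+1)):ℝ) * ((((n+1)+j+1).choose (j+1)):ℝ) * ((n:ℝ)+1)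
      = ((n.choose (j+1)):ℝ) * (((n+j+1).choose (j+1)):ℝ) * ((n:ℝ)+1)
        + 2*((j:ℝ)+1) * ((((n+1).choose (j+1)):ℝ) * (((n+j+1).choose (j+1)):ℝ)) := by
  have h1 := Nat.choose_mul_succ_eq n (j+1)
  rw [show (n+1) - (j+1) = n - j by omega] at h1
  have hc1 : ((n.choose (j+1)):ℝ) * ((n:ℝ)+1) = (((n+1).choose (j+1)):ℝ) * ((n:ℝ)-(j:ℝ)) := by
    have h := congrArg (Nat.cast : ℕ → ℝ) h1
    push_cast [Nat.cast_sub (le_of_lt hj)] at h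
    linarith
  have h2 := Nat.choose_mul_succ_eq (n+j+1) (j+1)
  rw [show (n+j+1+1) - (j+1) = n+1 by omega, show n+j+1+1 = n+j+2 by omega] at h2
  have hc2 : (((n+j+1).choose (j+1)):ℝ) * ((n:ℝ)+(j:ℝ)+2) = (((n+j+2).choose (j+1)):ℝ) * ((n:ℝ)+1) := by
    have h := congrArg (Nat.cast : ℕ → ℝ) h2
    push_cast at h
    linarith
  rw [show (n+1)+j+1 = n+j+2 by omega]
  linear_combination (-((((n+1)).choose (j+1)):ℝ)) * hc2 - ((((n+j+1)).choose (j+1)):ℝ) * hc1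

lemma perterm (n j : ℕ) (hj : j < n) :
    (((n+1).choose (j+1)):ℝ) * ((((n+1)+j+1).choose (j+1)):ℝ) / ((j:ℝ)+1)
      = ((n.choose (j+1)):ℝ) * (((n+j+1).choose (j+1)):ℝ) / ((j:ℝ)+1)
        + (2/((n:ℝ)+1)) * ((((n+1).choose (j+1)):ℝ) * (((n+j+1).choose (j+1)):ℝ)) := by
  have key := perterm_key n j hj
  have hd1 : ((j:ℝ)+1) ≠ 0 := by positivity
  have hd2 : ((n:ℝ)+1) ≠ 0 := by positivity
  field_simp
  linear_combination key

lemma perterm2 (n j : ℕ) (hj : j < n) :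
    (((n+1).choose (j+1)):ℝ) * ((((n+1)+j+1).choose (j+1)):ℝ) / ((j:ℝ)+1)^2
      = ((n.choose (j+1)):ℝ) * (((n+j+1).choose (j+1)):ℝ) / ((j:ℝ)+1)^2
        + (2/((n:ℝ)+1)) * (((n.choose (j+1)):ℝ) * (((n+j+1).choose (j+1)):ℝ) / ((j:ℝ)+1))
        + (2/(((n:ℝ)+1)^2)) * ((((n+1).choose (j+1)):ℝ) * (((n+j+1).choose (j+1)):ℝ)) := by
  have key := perterm_key n j hj
  have h1 := Nat.choose_mul_succ_eq n (j+1)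
  rw [show (n+1) - (j+1) = n - j by omega] at h1
  have hc1 : ((n.choose (j+1)):ℝ) * ((n:ℝ)+1) = (((n+1).choose (j+1)):ℝ) * ((n:ℝ)-(j:ℝ)) := by
    have h := congrArg (Nat.cast : ℕ → ℝ) h1
    push_cast [Nat.cast_sub (le_of_lt hj)] at h
    linarith
  have key2 : (((n+1).choose (j+1)):ℝ) * ((((n+1)+j+1).choose (j+1)):ℝ) * ((n:ℝ)+1)^2
      = ((n.choose (j+1)):ℝ) * (((n+j+1).choose (j+1)):ℝ) * ((n:ℝ)+1)^2
        + 2*((j:ℝ)+1)*((n:ℝ)+1) * (((n.choose (j+1)):ℝ) * (((n+j+1).choose (j+1)):ℝ))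
        + 2*((j:ℝ)+1)^2 * ((((n+1).choose (j+1)):ℝ) * (((n+j+1).choose (j+1)):ℝ)) := by
    linear_combination ((n:ℝ)+1) * key - (2*((j:ℝ)+1)*(((n+j+1).choose (j+1)):ℝ)) * hc1
  have hd1 : ((j:ℝ)+1) ≠ 0 := by positivity
  have hd2 : ((n:ℝ)+1) ≠ 0 := by positivity
  field_simp
  linear_combination key2

lemma Bs (n : ℕ) : ∑ j ∈ range n, (-1:ℝ)^j * ((n.choose (j+1)):ℝ) * (((n+j+1).choose (j+1)):ℝ) / ((j:ℝ)+1)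
    = 2 * H n := by
  induction n with
  | zero => simp [H]
  | succ n ih =>
    rw [Finset.sum_range_succ]
    have per : ∀ j ∈ range n,
        (-1:ℝ)^j * (((n+1).choose (j+1)):ℝ) * ((((n+1)+j+1).choose (j+1)):ℝ) / ((j:ℝ)+1)
        = (-1:ℝ)^j * ((n.choose (j+1)):ℝ) * (((n+j+1).choose (j+1)):ℝ) / ((j:ℝ)+1)
          + (2/((n:ℝ)+1)) * ((-1:ℝ)^j * (((n+1).choose (j+1)):ℝ) * (((n+j+1).choose (j+1)):ℝ)) := by
      intro j hj
      simp only [mem_range] at hj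
      have h := perterm n j hj
      linear_combination ((-1:ℝ)^j) * h
    rw [Finset.sum_congr rfl per, Finset.sum_add_distrib, ih, ← Finset.mul_sum, FSlem n]
    rw [Nat.choose_self, show (n+1)+n+1 = 2*n+2 by omega, c2 n, Hsucc]
    have hd2 : ((n:ℝ)+1) ≠ 0 := by positivity
    push_cast
    field_simp
    ring

lemma Ds (n : ℕ) : ∑ j ∈ range n, (-1:ℝ)^j * ((n.choose (j+1)):ℝ) * (((n+j+1).choose (j+1)):ℝ) / ((j:ℝ)+1)^2
    = 2 * H n ^ 2 := by
  induction n with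
  | zero => simp [H]
  | succ n ih =>
    rw [Finset.sum_range_succ]
    have per : ∀ j ∈ range n,
        (-1:ℝ)^j * (((n+1).choose (j+1)):ℝ) * ((((n+1)+j+1).choose (j+1)):ℝ) / ((j:ℝ)+1)^2
        = (-1:ℝ)^j * ((n.choose (j+1)):ℝ) * (((n+j+1).choose (j+1)):ℝ) / ((j:ℝ)+1)^2
          + (2/((n:ℝ)+1)) * ((-1:ℝ)^j * ((n.choose (j+1)):ℝ) * (((n+j+1).choose (j+1)):ℝ) / ((j:ℝ)+1))
          + (2/(((n:ℝ)+1)^2)) * ((-1:ℝ)^j * (((n+1).choose (j+1)):ℝ) * (((n+j+1).choose (j+1)):ℝ)) := by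
      intro j hj
      simp only [mem_range] at hj
      have h := perterm2 n j hj
      linear_combination ((-1:ℝ)^j) * h
    rw [Finset.sum_congr rfl per, Finset.sum_add_distrib, Finset.sum_add_distrib, ih,
      ← Finset.mul_sum, ← Finset.mul_sum, Bs n, FSlem n]
    rw [Nat.choose_self, show (n+1)+n+1 = 2*n+2 by omega, c2 n, Hsucc]
    have hd2 : ((n:ℝ)+1) ≠ 0 := by positivity
    push_cast
    field_simp
    ring

theorem stmt_13 (n : ℕ) :
    H n ^ 2 = (1 / 4) * ∑ k ∈ range (n + 1), (-1 : ℝ) ^ (n + k) *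
      (n.choose k : ℝ) * ((n + k).choose k : ℝ) * (H k ^ 2 + H2 k) := by
  have step1 : ∀ k ∈ range (n+1), (-1 : ℝ) ^ (n + k) *
      (n.choose k : ℝ) * ((n + k).choose k : ℝ) * (H k ^ 2 + H2 k)
      = ∑ j ∈ range (n+1), 2 * ((-1:ℝ)^j / ((j:ℝ)+1)^2) *
          ((-1 : ℝ) ^ (n + k) * (n.choose k : ℝ) * ((n + k).choose k : ℝ) * ((k.choose (j+1)):ℝ)) := by
    intro k hk
    simp only [mem_range] at hk
    rw [R k]
    have ext : ∑ j ∈ range k, (-1:ℝ)^j * ((k.choose (j+1)) : ℝ) / ((j:ℝ)+1)^2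
        = ∑ j ∈ range (n+1), (-1:ℝ)^j * ((k.choose (j+1)) : ℝ) / ((j:ℝ)+1)^2 := by
      apply Finset.sum_subset
      · intro x hx; simp only [mem_range] at hx ⊢; omega
      · intro x hx hnx
        simp only [mem_range] at hx hnx
        rw [(Nat.choose_eq_zero_of_lt (show k < x+1 by omega) : k.choose (x+1) = 0)]
        push_cast; ring
    rw [ext, Finset.mul_sum, Finset.mul_sum]
    apply Finset.sum_congr rfl
    intro j hj
    ring
  rw [Finset.sum_congr rfl step1, Finset.sum_comm]
  have step2 : ∀ j ∈ range (n+1),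
      ∑ k ∈ range (n+1), 2 * ((-1:ℝ)^j / ((j:ℝ)+1)^2) *
          ((-1 : ℝ) ^ (n + k) * (n.choose k : ℝ) * ((n + k).choose k : ℝ) * ((k.choose (j+1)):ℝ))
      = 2 * ((-1:ℝ)^j / ((j:ℝ)+1)^2) * ((n.choose (j+1) : ℝ) * (((n+(j+1)).choose (j+1)) : ℝ)) := by
    intro j hj
    rw [← Finset.mul_sum, star n (j+1)]
  rw [Finset.sum_congr rfl step2]
  have step3 : ∀ j ∈ range (n+1),
      2 * ((-1:ℝ)^j / ((j:ℝ)+1)^2) * ((n.choose (j+1) : ℝ) * (((n+(j+1)).choose (j+1)) : ℝ))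
      = 2 * ((-1:ℝ)^j * ((n.choose (j+1)):ℝ) * (((n+j+1).choose (j+1)):ℝ) / ((j:ℝ)+1)^2) := by
    intro j hj
    rw [show n+(j+1) = n+j+1 by omega]
    ring
  rw [Finset.sum_congr rfl step3, ← Finset.mul_sum, Finset.sum_range_succ,
    Nat.choose_succ_self]
  push_cast
  rw [show ((-1:ℝ)^n * 0 * (((n+n+1).choose (n+1)):ℝ) / ((n:ℝ)+1)^2) = 0 by ring, add_zero, Ds n]
  ring
end

section
/- For every non-negative integer n, ∑_{k=0}^{n} 4^k · C(n,k)² / C(2k,k) = C(4n,2n)/C(2n,n), where C(a,b) denotes the ordinary binomial coefficient. -/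
open Finset Nat

noncomputable def Tf (n k : ℕ) : ℝ :=
  4 ^ k / (((n - k)! : ℝ) ^ 2 * ((2 * k)! : ℝ))

noncomputable def Gf (n k : ℕ) : ℝ :=
  (k : ℝ) * (2 * k - 1) * ((4 * n + 3) * k - 2 * (n + 1) * (3 * n + 2)) * 4 ^ k /
    (((n + 1 - k)! : ℝ) ^ 2 * ((2 * k)! : ℝ))

lemma fact_ne (m : ℕ) : ((m ! : ℝ)) ≠ 0 := by
  exact_mod_cast (Nat.factorial_pos m).ne'

lemma cert (j k : ℕ) :
    ((k + j : ℝ) + 1) ^ 2 * (2 * (k + j) + 1) ^ 2 * Tf (k + j + 1) k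
      - (4 * (k + j) + 1) * (4 * (k + j) + 3) * Tf (k + j) k
    = Gf (k + j) (k + 1) - Gf (k + j) k := by
  unfold Tf Gf
  have h1 : k + j + 1 - k = j + 1 := by omega
  have h2 : k + j - k = j := by omega
  have h3 : k + j + 1 - (k + 1) = j := by omega
  rw [h1, h2, h3]
  have h4 : (j + 1)! = (j + 1) * j ! := Nat.factorial_succ j
  have h5 : 2 * (k + 1) = (2 * k + 1) + 1 := by ring
  rw [h4, h5, Nat.factorial_succ, Nat.factorial_succ]
  have ha := fact_ne j
  have hb := fact_ne (2 * k)
  push_cast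
  field_simp
  ring

lemma cert' (n k : ℕ) (h : k ≤ n) :
    ((n : ℝ) + 1) ^ 2 * (2 * n + 1) ^ 2 * Tf (n + 1) k
      - (4 * n + 1) * (4 * n + 3) * Tf n k
    = Gf n (k + 1) - Gf n k := by
  obtain ⟨j, rfl⟩ := Nat.exists_eq_add_of_le h
  exact_mod_cast cert j k

lemma Gf_zero (n : ℕ) : Gf n 0 = 0 := by simp [Gf]

lemma Gf_top (n : ℕ) :
    Gf n (n + 1) = -(((n : ℝ) + 1) ^ 2 * (2 * n + 1) ^ 2 * Tf (n + 1) (n + 1)) := by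
  unfold Gf Tf
  rw [Nat.sub_self]
  push_cast [Nat.factorial_zero]
  have hb := fact_ne (2 * (n + 1))
  field_simp
  ring

lemma key_s14 (n : ℕ) :
    ∑ k ∈ range (n + 1), Tf n k = ((4 * n)! : ℝ) / ((2 * n)! : ℝ) ^ 3 := by
  induction n with
  | zero => simp [Tf]
  | succ n ih =>
    have tele : ∑ k ∈ range (n + 1), (Gf n (k + 1) - Gf n k)
        = Gf n (n + 1) - Gf n 0 := Finset.sum_range_sub (Gf n) (n + 1)
    have hsum : ∑ k ∈ range (n + 1),
        (((n : ℝ) + 1) ^ 2 * (2 * n + 1) ^ 2 * Tf (n + 1) k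
          - (4 * n + 1) * (4 * n + 3) * Tf n k)
        = Gf n (n + 1) - Gf n 0 := by
      rw [← tele]
      refine Finset.sum_congr rfl fun k hk => ?_
      exact cert' n k (by simpa using Nat.lt_succ_iff.mp (Finset.mem_range.mp hk))
    rw [Finset.sum_sub_distrib, ← Finset.mul_sum, ← Finset.mul_sum, Gf_zero, Gf_top, ih] at hsum
    have hmain : ((n : ℝ) + 1) ^ 2 * (2 * n + 1) ^ 2 *
        ∑ k ∈ range (n + 1 + 1), Tf (n + 1) k
        = (4 * n + 1) * (4 * n + 3) * (((4 * n)! : ℝ) / ((2 * n)! : ℝ) ^ 3) := by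
      rw [Finset.sum_range_succ, mul_add]
      linarith [hsum]
    have h1 : (4 * (n + 1))! = (4 * n + 4) * ((4 * n + 3) * ((4 * n + 2) * ((4 * n + 1) * (4 * n)!))) := by
      have : 4 * (n + 1) = 4 * n + 4 := by ring
      rw [this]
      rw [show 4 * n + 4 = (4 * n + 3) + 1 from rfl, Nat.factorial_succ]
      rw [show 4 * n + 3 = (4 * n + 2) + 1 from rfl, Nat.factorial_succ]
      rw [show 4 * n + 2 = (4 * n + 1) + 1 from rfl, Nat.factorial_succ]
      rw [show 4 * n + 1 = (4 * n) + 1 from rfl, Nat.factorial_succ]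
    have h2 : (2 * (n + 1))! = (2 * n + 2) * ((2 * n + 1) * (2 * n)!) := by
      have : 2 * (n + 1) = 2 * n + 2 := by ring
      rw [this]
      rw [show 2 * n + 2 = (2 * n + 1) + 1 from rfl, Nat.factorial_succ]
      rw [show 2 * n + 1 = (2 * n) + 1 from rfl, Nat.factorial_succ]
    rw [h1, h2]
    have hc1 : ((n : ℝ) + 1) ^ 2 * (2 * n + 1) ^ 2 ≠ 0 := by positivity
    have hb := fact_ne (2 * n)
    have hb4 := fact_ne (4 * n)
    push_cast
    apply mul_left_cancel₀ hc1
    rw [hmain]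
    field_simp
    ring

theorem stmt_14 (n : ℕ) :
    ∑ k ∈ range (n + 1), (4 : ℝ) ^ k * (n.choose k : ℝ) ^ 2 /
        ((2 * k).choose k : ℝ) =
      ((4 * n).choose (2 * n) : ℝ) / ((2 * n).choose n : ℝ) := by
  have hterm : ∀ k ∈ range (n + 1),
      (4 : ℝ) ^ k * (n.choose k : ℝ) ^ 2 / ((2 * k).choose k : ℝ)
        = ((n ! : ℝ)) ^ 2 * Tf n k := by
    intro k hk
    have hkn : k ≤ n := Nat.lt_succ_iff.mp (Finset.mem_range.mp hk)
    rw [Nat.cast_choose ℝ hkn, Nat.cast_choose ℝ (by omega : k ≤ 2 * k)]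
    have h2k : 2 * k - k = k := by omega
    rw [h2k]
    unfold Tf
    have h1 := fact_ne k
    have h2 := fact_ne (n - k)
    have h3 := fact_ne (2 * k)
    have h4 := fact_ne n
    field_simp
  rw [Finset.sum_congr rfl hterm, ← Finset.mul_sum, key_s14,
    Nat.cast_choose ℝ (by omega : 2 * n ≤ 4 * n),
    Nat.cast_choose ℝ (by omega : n ≤ 2 * n)]
  have e1 : 4 * n - 2 * n = 2 * n := by omega
  have e2 : 2 * n - n = n := by omega
  rw [e1, e2]
  have h1 := fact_ne n
  have h2 := fact_ne (2 * n)
  have h3 := fact_ne (4 * n)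
  field_simp
end

section
/- For every non-negative integer n, ∑_{k=0}^{n} C(2n,2k) · C(2n−2k, n−k) · 4^k = C(4n,2n), where C(a,b) denotes the ordinary binomial coefficient. -/
open Finset

open Polynomial in
lemma coeff_sq_add_one_pow (m d : ℕ) :
    ((X ^ 2 + 1 : ℕ[X]) ^ m).coeff d = if d % 2 = 0 then m.choose (d / 2) else 0 := by
  rw [add_pow, finset_sum_coeff]
  have h : ∀ i ∈ range (m + 1),
      ((X ^ 2 : ℕ[X]) ^ i * 1 ^ (m - i) * (m.choose i : ℕ[X])).coeff d
        = if d = 2 * i then m.choose i else 0 := by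
    intro i _
    rw [one_pow, mul_one, ← pow_mul, coeff_mul_natCast, coeff_X_pow]
    split_ifs <;> simp
  rw [Finset.sum_congr rfl h]
  by_cases hd : d % 2 = 0
  · simp only [hd, if_true]
    by_cases hle : d / 2 ≤ m
    · rw [Finset.sum_eq_single (d / 2)]
      · simp; omega
      · intro b _ hb; rw [if_neg]; omega
      · intro hmem; exfalso; exact hmem (Finset.mem_range.2 (by omega))
    · rw [Nat.choose_eq_zero_of_lt (by omega)]
      apply Finset.sum_eq_zero
      intro i hi
      rw [if_neg]
      simp only [Finset.mem_range] at hi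
      omega
  · simp only [hd, if_false]
    apply Finset.sum_eq_zero
    intro i _
    rw [if_neg]; omega

open Polynomial in
theorem stmt_15 (n : ℕ) :
    ∑ k ∈ range (n + 1), (2 * n).choose (2 * k) * (2 * n - 2 * k).choose (n - k) * 4 ^ k =
      (4 * n).choose (2 * n) := by
  have key : (((X + 1 : ℕ[X]) ^ (4 * n)).coeff (2 * n) : ℕ) = (4 * n).choose (2 * n) :=
    coeff_X_add_one_pow ℕ _ _
  have h2 : (X + 1 : ℕ[X]) ^ (4 * n) = (2 * X + (X ^ 2 + 1)) ^ (2 * n) := by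
    rw [show 4 * n = 2 * (2 * n) by ring, pow_mul]
    ring
  rw [h2, add_pow, finset_sum_coeff] at key
  have hterm : ∀ j ∈ range (2 * n + 1),
      ((2 * X : ℕ[X]) ^ j * (X ^ 2 + 1) ^ (2 * n - j) * ((2 * n).choose j : ℕ[X])).coeff (2 * n)
        = 2 ^ j * (if (2 * n - j) % 2 = 0 then (2 * n - j).choose ((2 * n - j) / 2) else 0)
            * (2 * n).choose j := by
    intro j hj
    simp only [Finset.mem_range] at hj
    have hX : ((X : ℕ[X]) ^ j * (X ^ 2 + 1) ^ (2 * n - j)).coeff (2 * n)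
        = ((X ^ 2 + 1 : ℕ[X]) ^ (2 * n - j)).coeff (2 * n - j) := by
      have := coeff_X_pow_mul ((X ^ 2 + 1 : ℕ[X]) ^ (2 * n - j)) j (2 * n - j)
      rwa [show 2 * n - j + j = 2 * n by omega] at this
    rw [mul_pow, coeff_mul_natCast, mul_assoc,
      show ((2 : ℕ[X])) ^ j = ((2 ^ j : ℕ) : ℕ[X]) by push_cast; ring,
      coeff_natCast_mul, hX, coeff_sq_add_one_pow]
    push_cast
    ring
  rw [Finset.sum_congr rfl hterm] at key
  rw [← key]
  -- now reindex: only even j contribute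
  symm
  have himg : (range (n + 1)).image (fun k => 2 * k) ⊆ range (2 * n + 1) := by
    intro x hx
    simp only [Finset.mem_image, Finset.mem_range] at hx ⊢
    obtain ⟨k, hk, rfl⟩ := hx
    omega
  rw [← Finset.sum_subset himg (fun x hx hnx => by
      simp only [Finset.mem_range] at hx
      have hodd : x % 2 = 1 := by
        by_contra h
        exact hnx (Finset.mem_image.2 ⟨x / 2, Finset.mem_range.2 (by omega), by omega⟩)
      rw [if_neg (by omega)]
      ring),
    Finset.sum_image (fun a _ b _ h => by omega)]
  apply Finset.sum_congr rfl
  intro k hk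
  simp only [Finset.mem_range] at hk
  rw [if_pos (by omega)]
  have h1 : 2 * n - 2 * k = 2 * (n - k) := by omega
  rw [h1]
  have h2 : 2 * (n - k) / 2 = n - k := by omega
  rw [h2, show (2:ℕ) ^ (2 * k) = 4 ^ k by rw [pow_mul]; norm_num]
  ring
end
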